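/- arXiv:1608.07914 — 3 statements merged into one kernel-verified Lean document; each statement's English description precedes it below -/
import Mathlib

section
/- Carleman estimate for a 2×2 first-order system in x with an integral term (Proposition in Section 5). Let λ > 0 and δ > 0 be fixed and set ψ(x) = (e^{λd(x)} − e^{2λ‖d‖})/δ². Let A : Ω×V → ℝ^{2×2} and D : Ω×V×V → ℝ^{2×2} be measurable with all entries bounded. Then there exist s₁ > 0 and C > 0 such that for all s ≥ s₁ the following holds: for every w : [0,ℓ]×V → ℝ², measurable in v, differentiable in x with w and ∂ₓw square-integrable on Ω×V, satisfying w(0,v) = (0,0) for all v ∈ V and ∂ₓw(x,v) + A(x,v)w(x,v) + ∫_V D(x,v,v')w(x,v')dv' = F(x,v) on Ω×V with F square-integrable, one has ∫_Ω∫_V ( |∂ₓw(x,v)|² + s²|w(x,v)|² ) e^{2sψ(x)} dv dx ≤ C ∫_Ω∫_V |F(x,v)|² e^{2sψ(x)} dv dx, where |·| denotes the Euclidean norm on ℝ². -/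
open MeasureTheory


lemma abs_le_one_add_sq (a : ℝ) : |a| ≤ 1 + a ^ 2 := by
  rcases abs_cases a with ⟨h, _⟩ | ⟨h, _⟩ <;> nlinarith

/-- Cauchy–Schwarz: `(∫ f)² ≤ μ(univ) ∫ f²` for a finite measure. -/
lemma sq_integral_le {α : Type*} [MeasurableSpace α] {μ : Measure α} [IsFiniteMeasure μ]
    {f : α → ℝ} (hm : AEStronglyMeasurable f μ)
    (h2 : Integrable (fun x => f x ^ 2) μ) :
    (∫ x, f x ∂μ) ^ 2 ≤ (μ Set.univ).toReal * ∫ x, f x ^ 2 ∂μ := by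
  have hint : Integrable f μ := by
    refine h2.add (integrable_const 1) |>.mono' hm ?_
    · filter_upwards with x
      have := abs_le_one_add_sq (f x)
      simp only [Real.norm_eq_abs]
      simp only [Pi.add_apply, Real.norm_eq_abs]
      linarith [this]
  set M := (μ Set.univ).toReal with hM
  have hM0 : 0 ≤ M := ENNReal.toReal_nonneg
  set I := ∫ x, f x ∂μ with hI
  set I2 := ∫ x, f x ^ 2 ∂μ with hI2
  have key : 0 ≤ ∫ x, (M * f x - I) ^ 2 ∂μ := integral_nonneg fun x => sq_nonneg _
  have expand : ∫ x, (M * f x - I) ^ 2 ∂μ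
      = M ^ 2 * I2 - 2 * M * I * I + I ^ 2 * M := by
    have : (fun x => (M * f x - I) ^ 2)
        = fun x => M ^ 2 * (f x ^ 2) - (2 * M * I) * f x + I ^ 2 := by
      funext x; ring
    rw [this, integral_add, integral_sub, integral_const_mul, integral_const_mul,
      integral_const]
    · simp [hM, smul_eq_mul, measureReal_def]; ring
    · exact (h2.const_mul _)
    · exact hint.const_mul _
    · exact ((h2.const_mul _).sub (hint.const_mul _))
    · exact integrable_const _
  rcases eq_or_lt_of_le hM0 with h0 | hpos
  · have : μ = 0 := by
      apply Measure.measure_univ_eq_zero.mp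
      have hfin : μ Set.univ ≠ ⊤ := (measure_lt_top μ _).ne
      have h00 : (μ Set.univ).toReal = 0 := h0.symm
      exact ((ENNReal.toReal_eq_zero_iff _).mp h00).resolve_right hfin
    simp [hI, hI2, this]
  · nlinarith [key, expand]

lemma two_mul_le_aux (t a b : ℝ) (ht : 0 < t) : 2 * a * b ≤ t * a ^ 2 + 1 / t * b ^ 2 := by
  have h1 : t * (2 * a * b) ≤ t * (t * a ^ 2 + 1 / t * b ^ 2) := by
    have e : t * (t * a ^ 2 + 1 / t * b ^ 2) = (t * a) ^ 2 + b ^ 2 := by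
      field_simp
    rw [e]; nlinarith [sq_nonneg (t * a - b)]
  exact le_of_mul_le_mul_left h1 ht

/-- The velocity set `V = {v : v₀ ≤ |v| ≤ v₁}`. -/
def Vset (v₀ v₁ : ℝ) : Set ℝ := Set.Icc (-v₁) (-v₀) ∪ Set.Icc v₀ v₁

set_option maxHeartbeats 2000000 in
/-- Proposition 5.1: Carleman estimate for a `2×2` first-order system in `x`
with an integral term, with weight `ψ(x) = (e^{λd(x)} − e^{2λ‖d‖})/δ²`;
`|·|` is the Euclidean norm on `ℝ²` (squared norms are written out as sums). -/
theorem system_carleman_first_order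
    (ℓ v₀ v₁ : ℝ) (hℓ : 0 < ℓ) (hv₀ : 0 < v₀) (hv₀₁ : v₀ < v₁)
    (d : ℝ → ℝ)
    (hd : ContDiffOn ℝ 2 d (Set.Icc 0 ℓ))
    (hd_pos : ∀ x ∈ Set.Ioo 0 ℓ, 0 < d x)
    (hd' : ∀ x ∈ Set.Icc 0 ℓ, deriv d x < 0)
    (Md : ℝ) (hMd : IsGreatest ((fun x => |d x|) '' Set.Icc 0 ℓ) Md)
    (lam δ : ℝ) (hlam : 0 < lam) (hδ : 0 < δ)
    (A : ℝ → ℝ → Matrix (Fin 2) (Fin 2) ℝ)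
    (D : ℝ → ℝ → ℝ → Matrix (Fin 2) (Fin 2) ℝ)
    (hA_meas : ∀ i j : Fin 2, Measurable fun q : ℝ × ℝ => A q.1 q.2 i j)
    (hD_meas : ∀ i j : Fin 2, Measurable fun q : ℝ × ℝ × ℝ => D q.1 q.2.1 q.2.2 i j)
    (hA_bdd : ∃ MA : ℝ, ∀ x ∈ Set.Ioo 0 ℓ, ∀ v ∈ Vset v₀ v₁, ∀ i j : Fin 2,
      |A x v i j| ≤ MA)
    (hD_bdd : ∃ MD : ℝ, ∀ x ∈ Set.Ioo 0 ℓ, ∀ v ∈ Vset v₀ v₁, ∀ v' ∈ Vset v₀ v₁,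
      ∀ i j : Fin 2, |D x v v' i j| ≤ MD) :
    ∃ s₁ > (0:ℝ), ∃ C > (0:ℝ), ∀ s ≥ s₁, ∀ w F : ℝ → ℝ → Fin 2 → ℝ,
      (∀ i : Fin 2, Measurable (fun q : ℝ × ℝ => w q.1 q.2 i)) →
      (∀ i : Fin 2, ∀ v ∈ Vset v₀ v₁, ∀ x ∈ Set.Icc 0 ℓ,
        DifferentiableAt ℝ (fun y => w y v i) x) →
      IntegrableOn (fun q : ℝ × ℝ => ∑ i : Fin 2, (w q.1 q.2 i) ^ 2)
        ((Set.Ioo 0 ℓ) ×ˢ (Vset v₀ v₁)) →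
      IntegrableOn (fun q : ℝ × ℝ => ∑ i : Fin 2, (deriv (fun y => w y q.2 i) q.1) ^ 2)
        ((Set.Ioo 0 ℓ) ×ˢ (Vset v₀ v₁)) →
      IntegrableOn (fun q : ℝ × ℝ => ∑ i : Fin 2, (F q.1 q.2 i) ^ 2)
        ((Set.Ioo 0 ℓ) ×ˢ (Vset v₀ v₁)) →
      (∀ v ∈ Vset v₀ v₁, ∀ i : Fin 2, w 0 v i = 0) →
      (∀ x ∈ Set.Ioo 0 ℓ, ∀ v ∈ Vset v₀ v₁, ∀ i : Fin 2,
        deriv (fun y => w y v i) x + (A x v).mulVec (w x v) i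
          + (∫ v' in Vset v₀ v₁, (D x v v').mulVec (w x v') i) = F x v i) →
      (∫ x in Set.Ioo 0 ℓ, ∫ v in Vset v₀ v₁,
          ((∑ i : Fin 2, (deriv (fun y => w y v i) x) ^ 2)
            + s ^ 2 * ∑ i : Fin 2, (w x v i) ^ 2) *
            Real.exp (2 * s * ((Real.exp (lam * d x) - Real.exp (2 * lam * Md)) / δ ^ 2)))
        ≤ C * ∫ x in Set.Ioo 0 ℓ, ∫ v in Vset v₀ v₁,
            (∑ i : Fin 2, (F x v i) ^ 2) *
              Real.exp (2 * s * ((Real.exp (lam * d x) - Real.exp (2 * lam * Md)) / δ ^ 2)) := by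
    classical
  obtain ⟨MA0, hMA0⟩ := hA_bdd
  obtain ⟨MD0, hMD0⟩ := hD_bdd
  set MA : ℝ := max MA0 0 with hMAdef
  set MD : ℝ := max MD0 0 with hMDdef
  have hMA : ∀ x ∈ Set.Ioo 0 ℓ, ∀ v ∈ Vset v₀ v₁, ∀ i j : Fin 2, |A x v i j| ≤ MA :=
    fun x hx v hv i j => (hMA0 x hx v hv i j).trans (le_max_left _ _)
  have hMD : ∀ x ∈ Set.Ioo 0 ℓ, ∀ v ∈ Vset v₀ v₁, ∀ v' ∈ Vset v₀ v₁, ∀ i j : Fin 2,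
      |D x v v' i j| ≤ MD :=
    fun x hx v hv v' hv' i j => (hMD0 x hx v hv v' hv' i j).trans (le_max_left _ _)
  have hMA0' : 0 ≤ MA := le_max_right _ _
  have hMD0' : 0 ≤ MD := le_max_right _ _
  -- the weight and its derivative
  set ψ : ℝ → ℝ := fun x => (Real.exp (lam * d x) - Real.exp (2 * lam * Md)) / δ ^ 2 with hψdef
  set ψd : ℝ → ℝ := fun x => Real.exp (lam * d x) * (lam * deriv d x) / δ ^ 2 with hψddef
  have hMd0 : 0 ≤ Md := by
    obtain ⟨x0, _, hx0⟩ := hMd.1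
    rw [← hx0]; positivity
  have hdmem : ∀ x ∈ Set.Icc 0 ℓ, |d x| ≤ Md := fun x hx => hMd.2 ⟨x, hx, rfl⟩
  have hψ0 : ∀ x ∈ Set.Icc 0 ℓ, ψ x ≤ 0 := by
    intro x hx
    have h1 : d x ≤ 2 * Md := by
      have := hdmem x hx; have := abs_le.mp this; linarith
    have : lam * d x ≤ 2 * lam * Md := by nlinarith
    have := Real.exp_le_exp.mpr this
    have hδ2 : (0:ℝ) < δ ^ 2 := by positivity
    simp only [hψdef]
    apply div_nonpos_of_nonpos_of_nonneg <;> [linarith; positivity]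
  have hdiff : ∀ x ∈ Set.Icc 0 ℓ, DifferentiableAt ℝ d x := by
    intro x hx
    by_contra h
    have := deriv_zero_of_not_differentiableAt h
    have := hd' x hx
    linarith
  have hψd : ∀ x ∈ Set.Icc 0 ℓ, HasDerivAt ψ (ψd x) x := by
    intro x hx
    have h1 : HasDerivAt d (deriv d x) x := (hdiff x hx).hasDerivAt
    have h3 : HasDerivAt (fun y => Real.exp (lam * d y))
        (Real.exp (lam * d x) * (lam * deriv d x)) x := (h1.const_mul lam).exp
    exact (h3.sub_const (Real.exp (2 * lam * Md))).div_const (δ ^ 2)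
  have hdccont : ContinuousOn (deriv d) (Set.Icc 0 ℓ) := by
    have hdw : ContinuousOn (derivWithin d (Set.Icc 0 ℓ)) (Set.Icc 0 ℓ) :=
      hd.continuousOn_derivWithin (uniqueDiffOn_Icc hℓ) (by norm_num)
    refine hdw.congr fun x hx => ?_
    exact ((hdiff x hx).derivWithin ((uniqueDiffOn_Icc hℓ) x hx)).symm
  have hψdcont : ContinuousOn ψd (Set.Icc 0 ℓ) := by
    rw [hψddef]
    exact ((Real.continuous_exp.comp_continuousOn
      (continuousOn_const.mul hd.continuousOn)).mul
      (continuousOn_const.mul hdccont)).div_const _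
  obtain ⟨c, hc, hψdc⟩ : ∃ c > (0:ℝ), ∀ x ∈ Set.Icc 0 ℓ, ψd x ≤ -c := by
    obtain ⟨xm, hxm, hmax⟩ := isCompact_Icc.exists_isMaxOn
      (Set.nonempty_Icc.mpr hℓ.le) hψdcont
    have hneg : ψd xm < 0 := by
      rw [hψddef]
      apply div_neg_of_neg_of_pos
      · exact mul_neg_of_pos_of_neg (Real.exp_pos _)
          (mul_neg_of_pos_of_neg hlam (hd' xm hxm))
      · positivity
    exact ⟨-ψd xm, by linarith, fun x hx => by simpa using hmax hx⟩
  obtain ⟨H, hψdH⟩ : ∃ H : ℝ, ∀ x ∈ Set.Icc 0 ℓ, |ψd x| ≤ H := by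
    obtain ⟨H, hH⟩ := isCompact_Icc.exists_bound_of_continuousOn hψdcont
    exact ⟨H, fun x hx => by simpa [Real.norm_eq_abs] using hH x hx⟩
  have hH0 : 0 ≤ H := le_trans (abs_nonneg _) (hψdH 0 ⟨le_refl 0, hℓ.le⟩)
  -- the velocity set
  set V : Set ℝ := Vset v₀ v₁ with hVdef
  have hVm : MeasurableSet V := measurableSet_Icc.union measurableSet_Icc
  have hVfin : volume V ≠ ⊤ := by
    have hsub : V ⊆ Set.Icc (-v₁) v₁ := by
      rintro y (hy | hy) <;> rw [Set.mem_Icc] at * <;> constructor <;> linarith [hy.1, hy.2]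
    exact ((measure_mono hsub).trans_lt (isCompact_Icc.measure_lt_top)).ne
  set μV : ℝ := (volume V).toReal with hμVdef
  have hμV0 : 0 ≤ μV := ENNReal.toReal_nonneg
  set ν : Measure ℝ := volume.restrict V with hνdef
  haveI hνfin : IsFiniteMeasure ν := by
    constructor; rw [hνdef, Measure.restrict_apply_univ]; exact hVfin.lt_top
  have hνuniv : (ν Set.univ).toReal = μV := by rw [hνdef, Measure.restrict_apply_univ]
  set ρ : Measure ℝ := volume.restrict (Set.Ioo 0 ℓ) with hρdef
  set C3 : ℝ := 12 * MA ^ 2 + 12 * MD ^ 2 * μV ^ 2 with hC3def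
  have hC30 : 0 ≤ C3 := by positivity
  refine ⟨max 1 (Real.sqrt (2 * C3 + 2) / c + 1), lt_of_lt_of_le one_pos (le_max_left _ _),
    6 + 6 / c ^ 2, by positivity, ?_⟩
  intro s hs w F hwm hwd hWint hGint hFint hw0 hode
  have hs1 : (1:ℝ) ≤ s := le_trans (le_max_left _ _) hs
  have hs0 : (0:ℝ) < s := lt_of_lt_of_le one_pos hs1
  have hsc : 2 * C3 + 2 ≤ s ^ 2 * c ^ 2 := by
    have h1 : Real.sqrt (2 * C3 + 2) / c + 1 ≤ s := le_trans (le_max_right _ _) hs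
    have h2 : Real.sqrt (2 * C3 + 2) ≤ s * c := by
      rw [div_add' _ _ _ hc.ne'] at h1
      have := (div_le_iff₀ hc).mp h1
      nlinarith
    have h3 : (0:ℝ) ≤ Real.sqrt (2 * C3 + 2) := Real.sqrt_nonneg _
    nlinarith [Real.sq_sqrt (by linarith : (0:ℝ) ≤ 2 * C3 + 2)]
  set φ : ℝ → ℝ := fun x => Real.exp (2 * s * ψ x) with hφdef
  have hφpos : ∀ x, 0 < φ x := fun x => Real.exp_pos _
  have hφ1 : ∀ x ∈ Set.Icc 0 ℓ, φ x ≤ 1 := by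
    intro x hx
    rw [hφdef]
    simp only
    rw [Real.exp_le_one_iff]
    have := hψ0 x hx
    nlinarith
  set π : Measure (ℝ × ℝ) := ρ.prod ν with hπdef
  have hπ : (volume : Measure (ℝ × ℝ)).restrict ((Set.Ioo 0 ℓ) ×ˢ V) = π := by
    rw [hπdef, hρdef, hνdef, Measure.prod_restrict, ← Measure.volume_eq_prod]
  set Wf : ℝ × ℝ → ℝ := fun q => ∑ i : Fin 2, (w q.1 q.2 i) ^ 2 with hWfdef
  set Gf : ℝ × ℝ → ℝ := fun q => ∑ i : Fin 2, (deriv (fun y => w y q.2 i) q.1) ^ 2 with hGfdef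
  set Ff : ℝ × ℝ → ℝ := fun q => ∑ i : Fin 2, (F q.1 q.2 i) ^ 2 with hFfdef
  have hWπ : Integrable Wf π := by rw [← hπ]; exact hWint
  have hGπ : Integrable Gf π := by rw [← hπ]; exact hGint
  have hFπ : Integrable Ff π := by rw [← hπ]; exact hFint
  have hψcont : ContinuousOn ψ (Set.Icc 0 ℓ) := by
    rw [hψdef]
    exact ((Real.continuous_exp.comp_continuousOn
      (continuousOn_const.mul hd.continuousOn)).sub continuousOn_const).div_const _
  have hφcont : ContinuousOn φ (Set.Icc 0 ℓ) := by
    rw [hφdef]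
    exact Real.continuous_exp.comp_continuousOn (continuousOn_const.mul hψcont)
  have hφprod : AEStronglyMeasurable (fun q : ℝ × ℝ => φ q.1) π := by
    have h1 : ContinuousOn (fun q : ℝ × ℝ => φ q.1) ((Set.Ioo 0 ℓ) ×ˢ V) :=
      (hφcont.mono Set.Ioo_subset_Icc_self).comp continuous_fst.continuousOn
        fun q hq => hq.1
    have h2 : AEStronglyMeasurable (fun q : ℝ × ℝ => φ q.1)
        ((volume : Measure (ℝ × ℝ)).restrict ((Set.Ioo 0 ℓ) ×ˢ V)) :=
      h1.aestronglyMeasurable (measurableSet_Ioo.prod hVm)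
    rwa [hπ] at h2
  have hmemπ : ∀ᵐ q ∂π, q ∈ (Set.Ioo 0 ℓ) ×ˢ V := by
    rw [← hπ]; exact ae_restrict_mem (measurableSet_Ioo.prod hVm)
  have hbddmul : ∀ (f : ℝ × ℝ → ℝ), Integrable f π → (∀ q, 0 ≤ f q) →
      Integrable (fun q => f q * φ q.1) π := by
    intro f hf hf0
    refine hf.mono' (hf.aestronglyMeasurable.mul hφprod) ?_
    filter_upwards [hmemπ] with q hq
    rw [Real.norm_eq_abs, abs_of_nonneg (mul_nonneg (hf0 q) (hφpos q.1).le)]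
    calc f q * φ q.1 ≤ f q * 1 :=
          mul_le_mul_of_nonneg_left (hφ1 q.1 (Set.Ioo_subset_Icc_self hq.1)) (hf0 q)
      _ = f q := mul_one _
  have hWφπ : Integrable (fun q => Wf q * φ q.1) π :=
    hbddmul _ hWπ fun q => Finset.sum_nonneg fun i _ => sq_nonneg _
  have hGφπ : Integrable (fun q => Gf q * φ q.1) π :=
    hbddmul _ hGπ fun q => Finset.sum_nonneg fun i _ => sq_nonneg _
  have hFφπ : Integrable (fun q => Ff q * φ q.1) π :=
    hbddmul _ hFπ fun q => Finset.sum_nonneg fun i _ => sq_nonneg _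
  set IW : ℝ := ∫ q, Wf q * φ q.1 ∂π with hIWdef
  set IG : ℝ := ∫ q, Gf q * φ q.1 ∂π with hIGdef
  set IF : ℝ := ∫ q, Ff q * φ q.1 ∂π with hIFdef
  have hIW0 : 0 ≤ IW := integral_nonneg fun q => by positivity
  have hIG0 : 0 ≤ IG := integral_nonneg fun q => by positivity
  have hIF0 : 0 ≤ IF := integral_nonneg fun q => by positivity
  have hLHS : (∫ x in Set.Ioo 0 ℓ, ∫ v in Vset v₀ v₁,
          ((∑ i : Fin 2, (deriv (fun y => w y v i) x) ^ 2)
            + s ^ 2 * ∑ i : Fin 2, (w x v i) ^ 2) * φ x) = IG + s ^ 2 * IW := by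
    have hcomb : Integrable (fun q : ℝ × ℝ => (Gf q + s ^ 2 * Wf q) * φ q.1) π := by
      have : (fun q : ℝ × ℝ => (Gf q + s ^ 2 * Wf q) * φ q.1)
          = fun q => Gf q * φ q.1 + s ^ 2 * (Wf q * φ q.1) := by funext q; ring
      rw [this]; exact hGφπ.add (hWφπ.const_mul _)
    have e1 : (∫ x in Set.Ioo 0 ℓ, ∫ v in Vset v₀ v₁,
          ((∑ i : Fin 2, (deriv (fun y => w y v i) x) ^ 2)
            + s ^ 2 * ∑ i : Fin 2, (w x v i) ^ 2) * φ x)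
        = ∫ q, (Gf q + s ^ 2 * Wf q) * φ q.1 ∂π := (integral_prod _ hcomb).symm
    rw [e1]
    have : (fun q : ℝ × ℝ => (Gf q + s ^ 2 * Wf q) * φ q.1)
        = fun q => Gf q * φ q.1 + s ^ 2 * (Wf q * φ q.1) := by funext q; ring
    rw [this, integral_add hGφπ (hWφπ.const_mul _), integral_const_mul]
  have hRHS : (∫ x in Set.Ioo 0 ℓ, ∫ v in Vset v₀ v₁,
          (∑ i : Fin 2, (F x v i) ^ 2) * φ x) = IF := by
    exact (integral_prod _ hFφπ).symm
  have hscpos : 0 < s * c := mul_pos hs0 hc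
  have hmemρ : ∀ᵐ x ∂ρ, x ∈ Set.Icc 0 ℓ := by
    rw [hρdef]
    filter_upwards [ae_restrict_mem measurableSet_Ioo] with x hx
    exact Set.Ioo_subset_Icc_self hx
  have hφρ : AEStronglyMeasurable φ ρ := by
    rw [hρdef]
    exact (hφcont.mono Set.Ioo_subset_Icc_self).aestronglyMeasurable measurableSet_Ioo
  have hψdρ : AEStronglyMeasurable ψd ρ := by
    rw [hρdef]
    exact (hψdcont.mono Set.Ioo_subset_Icc_self).aestronglyMeasurable measurableSet_Ioo
  have hρIoc : (volume : Measure ℝ).restrict (Set.Ioc 0 ℓ) = ρ := by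
    rw [hρdef]; exact (Measure.restrict_congr_set Ioo_ae_eq_Ioc).symm
  have hii : ∀ f : ℝ → ℝ, Integrable f ρ → IntervalIntegrable f volume 0 ℓ := by
    intro f hf
    rw [intervalIntegrable_iff_integrableOn_Ioc_of_le hℓ.le]
    rw [IntegrableOn, hρIoc]; exact hf
  have hiieq : ∀ f : ℝ → ℝ, (∫ x in (0:ℝ)..ℓ, f x) = ∫ x, f x ∂ρ := by
    intro f
    rw [intervalIntegral.integral_of_le hℓ.le, hρIoc]
  have hbdd1 : ∀ f : ℝ → ℝ, Integrable f ρ → Measurable f → (∀ x, 0 ≤ f x) →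
      Integrable (fun x => f x * φ x) ρ := by
    intro f hf hfm hf0
    refine hf.mono' (hfm.aestronglyMeasurable.mul hφρ) ?_
    filter_upwards [hmemρ] with x hx
    rw [Real.norm_eq_abs, abs_of_nonneg (mul_nonneg (hf0 x) (hφpos x).le)]
    calc f x * φ x ≤ f x * 1 := mul_le_mul_of_nonneg_left (hφ1 x hx) (hf0 x)
      _ = f x := mul_one _
  have stepB : s ^ 2 * c ^ 2 * IW ≤ IG := by
    have hWae := hWπ.prod_left_ae
    have hGae := hGπ.prod_left_ae
    have hvV : ∀ᵐ v ∂ν, v ∈ V := by rw [hνdef]; exact ae_restrict_mem hVm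
    have key : ∀ᵐ v ∂ν, s * c * ∫ x, Wf (x, v) * φ x ∂ρ
        ≤ 1 / (s * c) * ∫ x, Gf (x, v) * φ x ∂ρ := by
      filter_upwards [hWae, hGae, hvV] with v hWv hGv hv
      set Sv : ℝ → ℝ := fun x => ∑ i : Fin 2, 2 * w x v i * deriv (fun y => w y v i) x
        with hSvdef
      set g : ℝ → ℝ := fun x => Wf (x, v) * φ x with hgdef
      set g' : ℝ → ℝ := fun x => Sv x * φ x + Wf (x, v) * (2 * s * ψd x * φ x) with hg'def
      have humeas : ∀ i : Fin 2, Measurable fun x => w x v i := fun i =>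
        (hwm i).comp (measurable_id.prodMk measurable_const)
      have hu'meas : ∀ i : Fin 2, Measurable fun x => deriv (fun y => w y v i) x := fun i =>
        measurable_deriv _
      have hWmeas : Measurable fun x => Wf (x, v) := by
        exact Finset.measurable_sum _ fun i _ => (humeas i).pow_const 2
      have hGmeas : Measurable fun x => Gf (x, v) := by
        exact Finset.measurable_sum _ fun i _ => (hu'meas i).pow_const 2
      have hSmeas : Measurable Sv := by
        rw [hSvdef]
        exact Finset.measurable_sum _ fun i _ =>
          (((humeas i).const_mul 2).mul (hu'meas i))
      have hg'meas : AEStronglyMeasurable g' ρ := by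
        rw [hg'def]
        exact (hSmeas.aestronglyMeasurable.mul hφρ).add
          (hWmeas.aestronglyMeasurable.mul ((hψdρ.const_mul (2 * s)).mul hφρ))
      have hW0 : ∀ x, (0:ℝ) ≤ Wf (x, v) := fun x => Finset.sum_nonneg fun i _ => sq_nonneg _
      have hG0 : ∀ x, (0:ℝ) ≤ Gf (x, v) := fun x => Finset.sum_nonneg fun i _ => sq_nonneg _
      have hWφv : Integrable (fun x => Wf (x, v) * φ x) ρ := hbdd1 _ hWv hWmeas hW0
      have hGφv : Integrable (fun x => Gf (x, v) * φ x) ρ := hbdd1 _ hGv hGmeas hG0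
      have hgderiv : ∀ x ∈ Set.Icc 0 ℓ, HasDerivAt g (g' x) x := by
        intro x hx
        have hsum : HasDerivAt (fun y => ∑ i : Fin 2, (w y v i) ^ 2) (Sv x) x := by
          have h2 : Sv x = ∑ i : Fin 2,
              (2:ℕ) * w x v i ^ (2 - 1) * deriv (fun y => w y v i) x := by
            rw [hSvdef]; norm_num
          rw [h2]
          exact HasDerivAt.fun_sum fun i _ => ((hwd i v hv x hx).hasDerivAt.pow 2)
        have hφx : HasDerivAt φ (2 * s * ψd x * φ x) x := by
          have h3 := (HasDerivAt.const_mul (2 * s) (hψd x hx)).exp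
          have e : Real.exp (2 * s * ψ x) * (2 * s * ψd x) = 2 * s * ψd x * φ x := by
            simp only [hφdef]; ring
          exact e ▸ h3
        exact hsum.mul hφx
      have hg'int : Integrable g' ρ := by
        refine Integrable.mono' (g := fun x => Gf (x, v) + (1 + 2 * s * H) * Wf (x, v))
          (hGv.add (hWv.const_mul _)) hg'meas ?_
        filter_upwards [hmemρ] with x hx
        have hφx1 : φ x ≤ 1 := hφ1 x hx
        have hφx0 : 0 < φ x := hφpos x
        have hψdx : |ψd x| ≤ H := hψdH x hx
        have hS : |Sv x| ≤ Wf (x, v) + Gf (x, v) := by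
          simp only [hSvdef, hWfdef, hGfdef, Fin.sum_univ_two]
          rw [abs_le]
          constructor <;>
            nlinarith [sq_nonneg (w x v 0 + deriv (fun y => w y v 0) x),
              sq_nonneg (w x v 0 - deriv (fun y => w y v 0) x),
              sq_nonneg (w x v 1 + deriv (fun y => w y v 1) x),
              sq_nonneg (w x v 1 - deriv (fun y => w y v 1) x)]
        rw [Real.norm_eq_abs, hg'def]
        have habs : |Sv x * φ x + Wf (x, v) * (2 * s * ψd x * φ x)|
            ≤ |Sv x| * φ x + Wf (x, v) * (2 * s * |ψd x|) * φ x := by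
          refine (abs_add_le _ _).trans ?_
          rw [abs_mul, abs_of_nonneg hφx0.le]
          gcongr
          rw [abs_mul, abs_mul, abs_of_nonneg (hW0 x)]
          rw [abs_mul, abs_of_nonneg (by positivity : (0:ℝ) ≤ 2 * s), abs_of_nonneg hφx0.le]
          ring_nf
          exact le_refl _
        refine habs.trans ?_
        have h1 : |Sv x| * φ x ≤ Wf (x, v) + Gf (x, v) := by
          calc |Sv x| * φ x ≤ (Wf (x, v) + Gf (x, v)) * 1 :=
                mul_le_mul hS hφx1 hφx0.le (by linarith [hW0 x, hG0 x])
            _ = Wf (x, v) + Gf (x, v) := mul_one _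
        have h2 : Wf (x, v) * (2 * s * |ψd x|) * φ x ≤ 2 * s * H * Wf (x, v) := by
          have hq : 2 * s * |ψd x| ≤ 2 * s * H := by nlinarith
          calc Wf (x, v) * (2 * s * |ψd x|) * φ x ≤ Wf (x, v) * (2 * s * H) * 1 :=
                mul_le_mul (mul_le_mul_of_nonneg_left hq (hW0 x)) hφx1 hφx0.le
                  (mul_nonneg (hW0 x) (by positivity))
            _ = 2 * s * H * Wf (x, v) := by ring
        linarith
      have hg0 : g 0 = 0 := by
        have h0 := hw0 v hv
        simp only [hgdef, hWfdef, Fin.sum_univ_two, h0 0, h0 1]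
        ring
      have hftc : ∫ x in (0:ℝ)..ℓ, g' x = g ℓ - g 0 :=
        intervalIntegral.integral_eq_sub_of_hasDerivAt
          (fun x hx => hgderiv x (by rwa [Set.uIcc_of_le hℓ.le] at hx)) (hii _ hg'int)
      have hrhs_int : Integrable
          (fun x => 1 / (s * c) * (Gf (x, v) * φ x) - s * c * (Wf (x, v) * φ x)) ρ :=
        (hGφv.const_mul _).sub (hWφv.const_mul _)
      have hcompare : ∀ x ∈ Set.Icc 0 ℓ,
          g' x ≤ 1 / (s * c) * (Gf (x, v) * φ x) - s * c * (Wf (x, v) * φ x) := by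
        intro x hx
        have hamgm : Sv x ≤ s * c * Wf (x, v) + 1 / (s * c) * Gf (x, v) := by
          simp only [hSvdef, hWfdef, hGfdef, Fin.sum_univ_two]
          have e0 := two_mul_le_aux (s * c) (w x v 0) (deriv (fun y => w y v 0) x) hscpos
          have e1 := two_mul_le_aux (s * c) (w x v 1) (deriv (fun y => w y v 1) x) hscpos
          ring_nf at e0 e1 ⊢
          linarith
        have hneg : 2 * s * ψd x * Wf (x, v) ≤ -(2 * (s * c)) * Wf (x, v) := by
          have h1 : s * ψd x ≤ s * (-c) := mul_le_mul_of_nonneg_left (hψdc x hx) hs0.le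
          have h2 : (s * ψd x) * Wf (x, v) ≤ (s * (-c)) * Wf (x, v) :=
            mul_le_mul_of_nonneg_right h1 (hW0 x)
          nlinarith
        have hstep : Sv x + 2 * s * ψd x * Wf (x, v)
            ≤ 1 / (s * c) * Gf (x, v) - s * c * Wf (x, v) := by linarith
        have hm := mul_le_mul_of_nonneg_right hstep (hφpos x).le
        calc g' x = (Sv x + 2 * s * ψd x * Wf (x, v)) * φ x := by rw [hg'def]; ring
          _ ≤ (1 / (s * c) * Gf (x, v) - s * c * Wf (x, v)) * φ x := hm
          _ = 1 / (s * c) * (Gf (x, v) * φ x) - s * c * (Wf (x, v) * φ x) := by ring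
      have hmono := intervalIntegral.integral_mono_on hℓ.le (hii _ hg'int)
        (hii _ hrhs_int) hcompare
      have hgl : 0 ≤ g ℓ := mul_nonneg (hW0 ℓ) (hφpos ℓ).le
      have h0le : (0:ℝ) ≤ ∫ x in (0:ℝ)..ℓ,
          (1 / (s * c) * (Gf (x, v) * φ x) - s * c * (Wf (x, v) * φ x)) := by
        rw [hftc, hg0, sub_zero] at hmono
        linarith
      rw [hiieq] at h0le
      rw [integral_sub (hGφv.const_mul _) (hWφv.const_mul _), integral_const_mul,
        integral_const_mul] at h0le
      linarith
    have hWi : Integrable (fun v => ∫ x, Wf (x, v) * φ x ∂ρ) ν :=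
      hWφπ.integral_prod_right
    have hGi : Integrable (fun v => ∫ x, Gf (x, v) * φ x ∂ρ) ν :=
      hGφπ.integral_prod_right
    have hmono2 := integral_mono_ae ((hWi.const_mul (s * c)))
      ((hGi.const_mul (1 / (s * c)))) key
    rw [integral_const_mul, integral_const_mul] at hmono2
    have hWrep : ∫ v, ∫ x, Wf (x, v) * φ x ∂ρ ∂ν = IW :=
      (integral_prod_symm _ hWφπ).symm
    have hGrep : ∫ v, ∫ x, Gf (x, v) * φ x ∂ρ ∂ν = IG :=
      (integral_prod_symm _ hGφπ).symm
    rw [hWrep, hGrep] at hmono2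
    have hfin := mul_le_mul_of_nonneg_left hmono2 (le_of_lt hscpos)
    calc s ^ 2 * c ^ 2 * IW = s * c * (s * c * IW) := by ring
      _ ≤ s * c * (1 / (s * c) * IG) := hfin
      _ = IG := by field_simp
  have stepC : IG ≤ 3 * IF + C3 * IW := by
    set Kb : ℝ → ℝ := fun x => ∫ v', Wf (x, v') ∂ν with hKbdef
    have hGx := hGφπ.prod_right_ae
    have hWx := hWφπ.prod_right_ae
    have hFx := hFφπ.prod_right_ae
    have hWsl := hWπ.prod_right_ae
    have hxX : ∀ᵐ x ∂ρ, x ∈ Set.Ioo 0 ℓ := by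
      rw [hρdef]; exact ae_restrict_mem measurableSet_Ioo
    have hvV : ∀ᵐ v ∂ν, v ∈ V := by rw [hνdef]; exact ae_restrict_mem hVm
    have hrestr : ∀ f : ℝ → ℝ, (∫ v' in V, f v') = ∫ v', f v' ∂ν := by
      intro f; rw [hνdef]
    have keyx : ∀ᵐ x ∂ρ, ∫ v, Gf (x, v) * φ x ∂ν
        ≤ 3 * (∫ v, Ff (x, v) * φ x ∂ν) + 12 * MA ^ 2 * (∫ v, Wf (x, v) * φ x ∂ν)
          + 12 * MD ^ 2 * μV ^ 2 * (Kb x * φ x) := by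
      filter_upwards [hGx, hWx, hFx, hWsl, hxX] with x hGxv hWxv hFxv hWslv hxmem
      have hKb0 : 0 ≤ Kb x :=
        integral_nonneg fun v' => Finset.sum_nonneg fun i _ => sq_nonneg _
      have hptv : ∀ᵐ v ∂ν, Gf (x, v) * φ x
          ≤ 3 * (Ff (x, v) * φ x) + 12 * MA ^ 2 * (Wf (x, v) * φ x)
            + 12 * MD ^ 2 * μV * (Kb x * φ x) := by
        filter_upwards [hvV] with v hv
        have hGb : Gf (x, v)
            ≤ 3 * Ff (x, v) + 12 * MA ^ 2 * Wf (x, v) + 12 * MD ^ 2 * μV * Kb x := by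
          set K : Fin 2 → ℝ := fun i => ∫ v' in V, (D x v v').mulVec (w x v') i with hKdef
          have hKν : ∀ i : Fin 2,
              K i = ∫ v', (D x v v').mulVec (w x v') i ∂ν := fun i => hrestr _
          have hKb2 : ∀ i : Fin 2, K i ^ 2 ≤ 2 * MD ^ 2 * μV * Kb x := by
            intro i
            set m : ℝ → ℝ := fun v' => |w x v' 0| + |w x v' 1| with hmdef
            have hmmeas : Measurable m :=
              (((hwm 0).comp (measurable_const.prodMk measurable_id)).abs.add
                ((hwm 1).comp (measurable_const.prodMk measurable_id)).abs)
            have hmint : Integrable m ν := by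
              refine Integrable.mono' ((integrable_const 2).add hWslv)
                hmmeas.aestronglyMeasurable ?_
              filter_upwards with v'
              rw [Real.norm_eq_abs, abs_of_nonneg (by rw [hmdef]; positivity)]
              have h1 := abs_le_one_add_sq (w x v' 0)
              have h2 := abs_le_one_add_sq (w x v' 1)
              simp only [hmdef, hWfdef, Fin.sum_univ_two, Pi.add_apply]
              linarith
            have hm2int : Integrable (fun v' => m v' ^ 2) ν := by
              refine Integrable.mono' (hWslv.const_mul 2)
                (hmmeas.pow_const 2).aestronglyMeasurable ?_
              filter_upwards with v'
              rw [Real.norm_eq_abs, abs_of_nonneg (sq_nonneg _)]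
              simp only [hmdef, hWfdef, Fin.sum_univ_two]
              nlinarith [sq_abs (w x v' 0), sq_abs (w x v' 1),
                sq_nonneg (|w x v' 0| - |w x v' 1|)]
            have hKabs : |K i| ≤ MD * ∫ v', m v' ∂ν := by
              rw [hKν i, ← integral_const_mul, ← Real.norm_eq_abs]
              refine le_trans (norm_integral_le_integral_norm _) ?_
              refine integral_mono_of_nonneg
                (Filter.Eventually.of_forall fun v' => norm_nonneg _)
                (hmint.const_mul MD) ?_
              filter_upwards [hvV] with v' hv'
              rw [Real.norm_eq_abs]
              have hD0 := hMD x hxmem v hv v' hv' i 0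
              have hD1 := hMD x hxmem v hv v' hv' i 1
              simp only [Matrix.mulVec, dotProduct, Fin.sum_univ_two, hmdef]
              calc |D x v v' i 0 * w x v' 0 + D x v v' i 1 * w x v' 1|
                  ≤ |D x v v' i 0| * |w x v' 0| + |D x v v' i 1| * |w x v' 1| := by
                    refine (abs_add_le _ _).trans ?_; rw [abs_mul, abs_mul]
                _ ≤ MD * |w x v' 0| + MD * |w x v' 1| :=
                    add_le_add (mul_le_mul hD0 le_rfl (abs_nonneg _) hMD0')
                      (mul_le_mul hD1 le_rfl (abs_nonneg _) hMD0')
                _ = MD * (|w x v' 0| + |w x v' 1|) := by ring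
            have hIm0 : 0 ≤ ∫ v', m v' ∂ν :=
              integral_nonneg fun v' => by rw [hmdef]; positivity
            have hcs := sq_integral_le hmmeas.aestronglyMeasurable hm2int
            rw [hνuniv] at hcs
            have hm2le : ∫ v', m v' ^ 2 ∂ν ≤ 2 * Kb x := by
              have e : (2:ℝ) * Kb x = ∫ v', 2 * Wf (x, v') ∂ν :=
                (integral_const_mul 2 _).symm
              rw [e]
              refine integral_mono_of_nonneg
                (Filter.Eventually.of_forall fun v' => sq_nonneg _)
                (hWslv.const_mul 2) (Filter.Eventually.of_forall fun v' => ?_)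
              simp only [hmdef, hWfdef, Fin.sum_univ_two]
              nlinarith [sq_abs (w x v' 0), sq_abs (w x v' 1),
                sq_nonneg (|w x v' 0| - |w x v' 1|)]
            have h1 : K i ^ 2 ≤ (MD * ∫ v', m v' ∂ν) ^ 2 := by
              rw [← sq_abs (K i)]
              exact pow_le_pow_left₀ (abs_nonneg _) hKabs 2
            calc K i ^ 2 ≤ (MD * ∫ v', m v' ∂ν) ^ 2 := h1
              _ = MD ^ 2 * (∫ v', m v' ∂ν) ^ 2 := by ring
              _ ≤ MD ^ 2 * (μV * ∫ v', m v' ^ 2 ∂ν) := by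
                  exact mul_le_mul_of_nonneg_left hcs (by positivity)
              _ ≤ MD ^ 2 * (μV * (2 * Kb x)) := by
                  exact mul_le_mul_of_nonneg_left
                    (mul_le_mul_of_nonneg_left hm2le hμV0) (by positivity)
              _ = 2 * MD ^ 2 * μV * Kb x := by ring
          have heq : ∀ i : Fin 2, deriv (fun y => w y v i) x
              = F x v i - (A x v).mulVec (w x v) i - K i := by
            intro i
            have h := hode x hxmem v hv i
            have hKi : K i = ∫ v' in V, (D x v v').mulVec (w x v') i := rfl
            rw [hKi]
            linarith
          have hAb : ∀ i : Fin 2,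
              ((A x v).mulVec (w x v) i) ^ 2 ≤ 2 * MA ^ 2 * Wf (x, v) := by
            intro i
            have hA0 := hMA x hxmem v hv i 0
            have hA1 := hMA x hxmem v hv i 1
            have ha0 : (A x v i 0) ^ 2 ≤ MA ^ 2 := by
              rw [← sq_abs]; exact pow_le_pow_left₀ (abs_nonneg _) hA0 2
            have ha1 : (A x v i 1) ^ 2 ≤ MA ^ 2 := by
              rw [← sq_abs]; exact pow_le_pow_left₀ (abs_nonneg _) hA1 2
            simp only [Matrix.mulVec, dotProduct, Fin.sum_univ_two, hWfdef]
            nlinarith [sq_nonneg (A x v i 0 * w x v 1 - A x v i 1 * w x v 0),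
              mul_le_mul_of_nonneg_right ha0 (sq_nonneg (w x v 0)),
              mul_le_mul_of_nonneg_right ha1 (sq_nonneg (w x v 1)),
              sq_nonneg (A x v i 0 * w x v 0 - A x v i 1 * w x v 1)]
          have hfin : ∀ i : Fin 2, (deriv (fun y => w y v i) x) ^ 2
              ≤ 3 * (F x v i) ^ 2 + 6 * MA ^ 2 * Wf (x, v) + 6 * MD ^ 2 * μV * Kb x := by
            intro i
            rw [heq i]
            have h2 := hAb i
            have h3 := hKb2 i
            nlinarith [sq_nonneg (F x v i + (A x v).mulVec (w x v) i),
              sq_nonneg (F x v i + K i),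
              sq_nonneg ((A x v).mulVec (w x v) i - K i)]
          have hf0 := hfin 0
          have hf1 := hfin 1
          simp only [hGfdef, hFfdef, Fin.sum_univ_two]
          linarith
        have hm := mul_le_mul_of_nonneg_right hGb (hφpos x).le
        calc Gf (x, v) * φ x
            ≤ (3 * Ff (x, v) + 12 * MA ^ 2 * Wf (x, v) + 12 * MD ^ 2 * μV * Kb x) * φ x := hm
          _ = 3 * (Ff (x, v) * φ x) + 12 * MA ^ 2 * (Wf (x, v) * φ x)
              + 12 * MD ^ 2 * μV * (Kb x * φ x) := by ring
      have hc1 : Integrable (fun v => 3 * (Ff (x, v) * φ x)) ν := hFxv.const_mul 3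
      have hc2 : Integrable (fun v => 12 * MA ^ 2 * (Wf (x, v) * φ x)) ν :=
        hWxv.const_mul _
      have hc12 : Integrable
          (fun v => 3 * (Ff (x, v) * φ x) + 12 * MA ^ 2 * (Wf (x, v) * φ x)) ν := by
        have := hc1.add hc2; exact this
      have hint2 : Integrable (fun v => 3 * (Ff (x, v) * φ x)
          + 12 * MA ^ 2 * (Wf (x, v) * φ x) + 12 * MD ^ 2 * μV * (Kb x * φ x)) ν := by
        have := hc12.add (integrable_const (12 * MD ^ 2 * μV * (Kb x * φ x))); exact this
      have hmono := integral_mono_ae hGxv hint2 hptv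
      refine hmono.trans ?_
      have e1 : ∫ v, (3 * (Ff (x, v) * φ x) + 12 * MA ^ 2 * (Wf (x, v) * φ x)
            + 12 * MD ^ 2 * μV * (Kb x * φ x)) ∂ν
          = (∫ v, (3 * (Ff (x, v) * φ x) + 12 * MA ^ 2 * (Wf (x, v) * φ x)) ∂ν)
            + ∫ _v : ℝ, (12 * MD ^ 2 * μV * (Kb x * φ x)) ∂ν :=
        integral_add hc12 (integrable_const _)
      have e2 : ∫ v, (3 * (Ff (x, v) * φ x) + 12 * MA ^ 2 * (Wf (x, v) * φ x)) ∂ν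
          = (∫ v, 3 * (Ff (x, v) * φ x) ∂ν) + ∫ v, 12 * MA ^ 2 * (Wf (x, v) * φ x) ∂ν :=
        integral_add hc1 hc2
      have e3 : ∫ v, 3 * (Ff (x, v) * φ x) ∂ν = 3 * ∫ v, Ff (x, v) * φ x ∂ν :=
        integral_const_mul _ _
      have e4 : ∫ v, 12 * MA ^ 2 * (Wf (x, v) * φ x) ∂ν
          = 12 * MA ^ 2 * ∫ v, Wf (x, v) * φ x ∂ν := integral_const_mul _ _
      have e5 : ∫ _v : ℝ, (12 * MD ^ 2 * μV * (Kb x * φ x)) ∂ν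
          = μV * (12 * MD ^ 2 * μV * (Kb x * φ x)) := by
        rw [integral_const, measureReal_def, hνuniv, smul_eq_mul]
      rw [e1, e2, e3, e4, e5]
      apply le_of_eq
      ring
    have hGint1 : Integrable (fun x => ∫ v, Gf (x, v) * φ x ∂ν) ρ := hGφπ.integral_prod_left
    have hFint1 : Integrable (fun x => ∫ v, Ff (x, v) * φ x ∂ν) ρ := hFφπ.integral_prod_left
    have hWint1 : Integrable (fun x => ∫ v, Wf (x, v) * φ x ∂ν) ρ := hWφπ.integral_prod_left
    have hKbφeq : (fun x => ∫ v, Wf (x, v) * φ x ∂ν) = fun x => Kb x * φ x := by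
      funext x
      exact integral_mul_const _ _
    have hKbφint : Integrable (fun x => Kb x * φ x) ρ := hKbφeq ▸ hWint1
    have hc3 : Integrable (fun x => 3 * (∫ v, Ff (x, v) * φ x ∂ν)) ρ :=
      hFint1.const_mul 3
    have hc4 : Integrable (fun x => 12 * MA ^ 2 * (∫ v, Wf (x, v) * φ x ∂ν)) ρ :=
      hWint1.const_mul _
    have hc5 : Integrable (fun x => 12 * MD ^ 2 * μV ^ 2 * (Kb x * φ x)) ρ :=
      hKbφint.const_mul _
    have hc34 : Integrable (fun x => 3 * (∫ v, Ff (x, v) * φ x ∂ν)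
        + 12 * MA ^ 2 * (∫ v, Wf (x, v) * φ x ∂ν)) ρ := by
      have := hc3.add hc4; exact this
    have hmajint : Integrable (fun x => 3 * (∫ v, Ff (x, v) * φ x ∂ν)
        + 12 * MA ^ 2 * (∫ v, Wf (x, v) * φ x ∂ν)
        + 12 * MD ^ 2 * μV ^ 2 * (Kb x * φ x)) ρ := by
      have := hc34.add hc5; exact this
    have hmono3 := integral_mono_ae hGint1 hmajint keyx
    have hGrep : ∫ x, ∫ v, Gf (x, v) * φ x ∂ν ∂ρ = IG := (integral_prod _ hGφπ).symm
    have hFrep : ∫ x, ∫ v, Ff (x, v) * φ x ∂ν ∂ρ = IF := (integral_prod _ hFφπ).symm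
    have hWrep1 : ∫ x, ∫ v, Wf (x, v) * φ x ∂ν ∂ρ = IW := (integral_prod _ hWφπ).symm
    have hWrep2 : ∫ x, Kb x * φ x ∂ρ = IW := by rw [← hKbφeq]; exact hWrep1
    have E1 : ∫ x, (3 * (∫ v, Ff (x, v) * φ x ∂ν)
          + 12 * MA ^ 2 * (∫ v, Wf (x, v) * φ x ∂ν)
          + 12 * MD ^ 2 * μV ^ 2 * (Kb x * φ x)) ∂ρ
        = (∫ x, (3 * (∫ v, Ff (x, v) * φ x ∂ν)
            + 12 * MA ^ 2 * (∫ v, Wf (x, v) * φ x ∂ν)) ∂ρ)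
          + ∫ x, 12 * MD ^ 2 * μV ^ 2 * (Kb x * φ x) ∂ρ := integral_add hc34 hc5
    have E2 : ∫ x, (3 * (∫ v, Ff (x, v) * φ x ∂ν)
          + 12 * MA ^ 2 * (∫ v, Wf (x, v) * φ x ∂ν)) ∂ρ
        = (∫ x, 3 * (∫ v, Ff (x, v) * φ x ∂ν) ∂ρ)
          + ∫ x, 12 * MA ^ 2 * (∫ v, Wf (x, v) * φ x ∂ν) ∂ρ := integral_add hc3 hc4
    have E3 : ∫ x, 3 * (∫ v, Ff (x, v) * φ x ∂ν) ∂ρ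
        = 3 * ∫ x, ∫ v, Ff (x, v) * φ x ∂ν ∂ρ := integral_const_mul _ _
    have E4 : ∫ x, 12 * MA ^ 2 * (∫ v, Wf (x, v) * φ x ∂ν) ∂ρ
        = 12 * MA ^ 2 * ∫ x, ∫ v, Wf (x, v) * φ x ∂ν ∂ρ := integral_const_mul _ _
    have E5 : ∫ x, 12 * MD ^ 2 * μV ^ 2 * (Kb x * φ x) ∂ρ
        = 12 * MD ^ 2 * μV ^ 2 * ∫ x, Kb x * φ x ∂ρ := integral_const_mul _ _
    rw [hGrep, E1, E2, E3, E4, E5, hFrep, hWrep1, hWrep2] at hmono3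
    have hC3e : C3 * IW = 12 * MA ^ 2 * IW + 12 * MD ^ 2 * μV ^ 2 * IW := by
      rw [hC3def]; ring
    linarith
  -- final arithmetic
  have hkey : s ^ 2 * c ^ 2 * IW ≤ 3 * IF + C3 * IW := le_trans stepB stepC
  have hC3IW : C3 * IW ≤ 3 * IF := by
    have e1 : C3 * IW ≤ (s ^ 2 * c ^ 2 - C3) * IW :=
      mul_le_mul_of_nonneg_right (by linarith) hIW0
    have e2 : (s ^ 2 * c ^ 2 - C3) * IW = s ^ 2 * c ^ 2 * IW - C3 * IW := by ring
    linarith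
  have hIWbound : s ^ 2 * c ^ 2 * IW ≤ 6 * IF := by linarith
  have hIGbound : IG ≤ 6 * IF := by linarith
  have hs2IW : s ^ 2 * IW ≤ 6 / c ^ 2 * IF := by
    rw [div_mul_eq_mul_div, le_div_iff₀ (by positivity : (0:ℝ) < c ^ 2)]
    have e3 : s ^ 2 * IW * c ^ 2 = s ^ 2 * c ^ 2 * IW := by ring
    linarith
  calc (∫ x in Set.Ioo 0 ℓ, ∫ v in Vset v₀ v₁,
          ((∑ i : Fin 2, (deriv (fun y => w y v i) x) ^ 2)
            + s ^ 2 * ∑ i : Fin 2, (w x v i) ^ 2) * φ x) = IG + s ^ 2 * IW := hLHS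
    _ ≤ 6 * IF + 6 / c ^ 2 * IF := by linarith
    _ = (6 + 6 / c ^ 2) * IF := by ring
    _ = (6 + 6 / c ^ 2) * (∫ x in Set.Ioo 0 ℓ, ∫ v in Vset v₀ v₁,
          (∑ i : Fin 2, (F x v i) ^ 2) * φ x) := by rw [hRHS]
end

section
/- Scalar Carleman estimate for a first-order equation in x with an integral term (Lemma A.1). Let λ > 0 and δ > 0 be fixed and set ψ(x) = (e^{λd(x)} − e^{2λ‖d‖})/δ². Let b : Ω×V → ℝ and c : Ω×V×V → ℝ be measurable and bounded. Then there exist s₁ > 0 and C > 0 such that for all s ≥ s₁ the following holds: for every w : [0,ℓ]×V → ℝ, measurable in v, differentiable in x with w and ∂ₓw square-integrable on Ω×V, satisfying w(0,v) = 0 for all v ∈ V and ∂ₓw(x,v) + b(x,v)w(x,v) + ∫_V c(x,v,v')w(x,v')dv' = F(x,v) on Ω×V with F square-integrable, one has ∫_Ω∫_V ( |∂ₓw(x,v)|² + s²|w(x,v)|² ) e^{2sψ(x)} dv dx ≤ C ∫_Ω∫_V |F(x,v)|² e^{2sψ(x)} dv dx. -/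
open MeasureTheory

lemma sq_integral_abs_le {ν : Measure ℝ} [IsFiniteMeasure ν] {g : ℝ → ℝ}
    (hm : AEStronglyMeasurable g ν) (h2 : Integrable (fun v => g v ^ 2) ν) :
    (∫ v, |g v| ∂ν) ^ 2 ≤ (ν Set.univ).toReal * ∫ v, g v ^ 2 ∂ν := by
  have hg1 : Integrable (fun v => |g v|) ν := by
    refine Integrable.mono' ((integrable_const (1:ℝ)).add h2) (by simpa [Real.norm_eq_abs] using hm.norm) ?_
    filter_upwards with v
    have h : |g v| ≤ 1 + g v ^ 2 := by nlinarith [abs_nonneg (g v), sq_abs (g v)]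
    simpa [abs_abs] using h
  set J := ∫ v, |g v| ∂ν with hJdef
  set Pq := ∫ v, g v ^ 2 ∂ν with hPdef
  set M := (ν Set.univ).toReal with hMdef
  have hM : 0 ≤ M := ENNReal.toReal_nonneg
  have hP : 0 ≤ Pq := integral_nonneg fun v => sq_nonneg _
  have hJ : 0 ≤ J := integral_nonneg fun v => abs_nonneg _
  have key : ∀ t : ℝ, 0 ≤ M * (t * t) + (-2 * J) * t + Pq := by
    intro t
    rcases le_or_gt t 0 with ht | ht
    · nlinarith
    · have hpt : ∀ v, |g v| ≤ (t + g v ^ 2 / t) / 2 := by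
        intro v
        rw [le_div_iff₀ (by norm_num : (0:ℝ) < 2), ← mul_le_mul_iff_of_pos_right ht]
        have he : (t + g v ^ 2 / t) * t = t ^ 2 + g v ^ 2 := by
          field_simp
        rw [mul_comm (|g v|) 2, mul_assoc, he]
        nlinarith [sq_nonneg (t - |g v|), sq_abs (g v)]
      have hint : Integrable (fun v => (t + g v ^ 2 / t) / 2) ν :=
        ((integrable_const t).add (h2.div_const t)).div_const 2
      have hJle : J ≤ ∫ v, (t + g v ^ 2 / t) / 2 ∂ν :=
        integral_mono hg1 hint hpt
      have hval : ∫ v, (t + g v ^ 2 / t) / 2 ∂ν = (t * M + Pq / t) / 2 := by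
        rw [integral_div, integral_add (integrable_const t) (h2.div_const t),
          integral_const, measureReal_def, integral_div, smul_eq_mul]
        ring
      have hPc : Pq / t * t = Pq := div_mul_cancel₀ Pq ht.ne'
      nlinarith [hJle.trans_eq hval]
  have hd := discrim_le_zero key
  rw [discrim] at hd
  nlinarith [hd]

lemma energy_1d {l s ρ MP : ℝ} (hl : 0 < l) (hs : 0 < s) (hρ : 0 < ρ)
    {ψ P : ℝ → ℝ}
    (hψd : ∀ x ∈ Set.Icc 0 l, HasDerivAt ψ (P x) x)
    (hψ0 : ∀ x ∈ Set.Icc 0 l, ψ x ≤ 0)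
    (hP : ∀ x ∈ Set.Icc 0 l, P x ≤ -ρ)
    (hPb : ∀ x ∈ Set.Icc 0 l, |P x| ≤ MP)
    (hPm : AEStronglyMeasurable P (volume.restrict (Set.Ioo 0 l)))
    {u : ℝ → ℝ}
    (hu : ∀ x ∈ Set.Icc 0 l, DifferentiableAt ℝ u x) (hu0 : u 0 = 0)
    (hu2 : IntegrableOn (fun x => u x ^ 2) (Set.Ioo 0 l))
    (hu'2 : IntegrableOn (fun x => deriv u x ^ 2) (Set.Ioo 0 l)) :
    s ^ 2 * ρ ^ 2 * ∫ x in Set.Ioo 0 l, u x ^ 2 * Real.exp (2 * s * ψ x)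
      ≤ ∫ x in Set.Ioo 0 l, (deriv u x) ^ 2 * Real.exp (2 * s * ψ x) := by
  set E := fun x => Real.exp (2 * s * ψ x) with hEdef
  have hEpos : ∀ x, 0 < E x := fun x => Real.exp_pos _
  have hE1 : ∀ x ∈ Set.Icc 0 l, E x ≤ 1 := by
    intro x hx
    have h1 : 2 * s * ψ x ≤ 0 :=
      mul_nonpos_of_nonneg_of_nonpos (by linarith) (hψ0 x hx)
    simpa [hEdef] using Real.exp_le_one_iff.2 h1
  have hEd : ∀ x ∈ Set.Icc 0 l, HasDerivAt E (2 * s * P x * E x) x := by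
    intro x hx
    have h := ((hψd x hx).const_mul (2 * s)).exp
    convert h using 1
    ring
  have hEcont : ContinuousOn E (Set.Icc 0 l) :=
    fun x hx => (hEd x hx).continuousAt.continuousWithinAt
  have hucont : ContinuousOn u (Set.Icc 0 l) :=
    fun x hx => (hu x hx).continuousAt.continuousWithinAt
  have hMP0 : 0 ≤ MP := le_trans (abs_nonneg _) (hPb 0 ⟨le_refl 0, hl.le⟩)
  -- measurability on the restricted measure
  have hum : AEStronglyMeasurable u (volume.restrict (Set.Ioo 0 l)) :=
    (hucont.mono Set.Ioo_subset_Icc_self).aestronglyMeasurable measurableSet_Ioo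
  have hu'm : AEStronglyMeasurable (deriv u) (volume.restrict (Set.Ioo 0 l)) :=
    (measurable_deriv u).aestronglyMeasurable
  have hEm : AEStronglyMeasurable E (volume.restrict (Set.Ioo 0 l)) :=
    (hEcont.mono Set.Ioo_subset_Icc_self).aestronglyMeasurable measurableSet_Ioo
  have hmem : ∀ᵐ x ∂(volume.restrict (Set.Ioo 0 l)), x ∈ Set.Ioo 0 l :=
    ae_restrict_mem measurableSet_Ioo
  -- integrability of the pieces
  have huE : IntegrableOn (fun x => u x ^ 2 * E x) (Set.Ioo 0 l) := by
    refine hu2.mono' (((hum.mul hum).congr ?_).mul hEm) ?_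
    · filter_upwards with x
      simp only [Pi.mul_apply]; ring
    · filter_upwards [hmem] with x hx
      have h1 := hE1 x (Set.Ioo_subset_Icc_self hx)
      have h2 := (hEpos x).le
      have h5 := sq_nonneg (u x)
      rw [Real.norm_eq_abs, abs_of_nonneg (by nlinarith)]
      nlinarith
  have hu'E : IntegrableOn (fun x => deriv u x ^ 2 * E x) (Set.Ioo 0 l) := by
    refine hu'2.mono' (((hu'm.mul hu'm).congr ?_).mul hEm) ?_
    · filter_upwards with x
      simp only [Pi.mul_apply]; ring
    · filter_upwards [hmem] with x hx
      have h1 := hE1 x (Set.Ioo_subset_Icc_self hx)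
      have h2 := (hEpos x).le
      have h5 := sq_nonneg (deriv u x)
      rw [Real.norm_eq_abs, abs_of_nonneg (by nlinarith)]
      nlinarith
  have i1 : IntegrableOn (fun x => 2 * u x * deriv u x * E x) (Set.Ioo 0 l) := by
    refine (hu2.add hu'2).mono'
      ((((aestronglyMeasurable_const.mul hum).mul hu'm)).mul hEm) ?_
    filter_upwards [hmem] with x hx
    have h1 := hE1 x (Set.Ioo_subset_Icc_self hx)
    have h2 := (hEpos x).le
    rw [Real.norm_eq_abs, abs_mul]
    have h3 : |E x| = E x := abs_of_nonneg h2
    rw [h3]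
    have h4 : |2 * u x * deriv u x| ≤ u x ^ 2 + deriv u x ^ 2 := by
      rw [abs_mul, abs_mul, abs_two]
      have := abs_nonneg (u x)
      have := abs_nonneg (deriv u x)
      nlinarith [sq_nonneg (|u x| - |deriv u x|), sq_abs (u x), sq_abs (deriv u x)]
    calc |2 * u x * deriv u x| * E x
        ≤ (u x ^ 2 + deriv u x ^ 2) * 1 :=
          mul_le_mul h4 h1 h2 (by positivity)
      _ = ((fun x => u x ^ 2) + fun x => deriv u x ^ 2) x := by
          simp only [Pi.add_apply]; ring
  have i2 : IntegrableOn (fun x => 2 * s * P x * u x ^ 2 * E x) (Set.Ioo 0 l) := by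
    refine (hu2.const_mul (2 * s * MP)).mono'
      ((((aestronglyMeasurable_const.mul hPm)).mul ((hum.mul hum).congr
        (by filter_upwards with x; simp only [Pi.mul_apply]; ring))).mul hEm) ?_
    filter_upwards [hmem] with x hx
    have hxI := Set.Ioo_subset_Icc_self hx
    have h1 := hE1 x hxI
    have h2 := (hEpos x).le
    have h3 := hPb x hxI
    have h4 := abs_nonneg (P x)
    rw [Real.norm_eq_abs, abs_mul, abs_mul, abs_mul, abs_of_nonneg (by linarith : (0:ℝ) ≤ 2 * s),
      abs_of_nonneg (sq_nonneg (u x)), abs_of_nonneg h2]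
    have t1 : |P x| * E x ≤ MP * 1 := mul_le_mul h3 h1 h2 (h4.trans h3)
    calc 2 * s * |P x| * u x ^ 2 * E x = (2 * s * u x ^ 2) * (|P x| * E x) := by ring
      _ ≤ (2 * s * u x ^ 2) * (MP * 1) :=
          mul_le_mul_of_nonneg_left t1 (by positivity)
      _ = 2 * s * MP * u x ^ 2 := by ring
  -- FTC
  set g := fun x => 2 * u x * deriv u x * E x + 2 * s * P x * u x ^ 2 * E x with hgdef
  have hgderiv : ∀ x ∈ Set.Icc 0 l, HasDerivAt (fun y => u y ^ 2 * E y) (g x) x := by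
    intro x hx
    have h1 : HasDerivAt (fun y => u y ^ 2) (2 * u x * deriv u x) x := by
      have h := ((hu x hx).hasDerivAt.mul (hu x hx).hasDerivAt)
      have heq : (fun y => u y * u y) = fun y => u y ^ 2 := by funext y; ring
      rw [show (u * u) = fun y => u y ^ 2 from heq] at h
      exact h.congr_deriv (by ring)
    have h2 := h1.mul (hEd x hx)
    exact h2.congr_deriv (by simp only [hgdef]; ring)
  have hgi : IntegrableOn g (Set.Ioo 0 l) := i1.add i2
  have hgI : IntervalIntegrable g volume 0 l := by
    rw [intervalIntegrable_iff_integrableOn_Ioc_of_le hl.le]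
    have hres : volume.restrict (Set.Ioo 0 l) = volume.restrict (Set.Ioc 0 l) :=
      Measure.restrict_congr_set Ioo_ae_eq_Ioc
    unfold IntegrableOn at hgi ⊢
    rwa [← hres]
  have hFTC : ∫ x in (0:ℝ)..l, g x = u l ^ 2 * E l - u 0 ^ 2 * E 0 :=
    intervalIntegral.integral_eq_sub_of_hasDerivAt
      (fun x hx => hgderiv x (by rwa [Set.uIcc_of_le hl.le] at hx)) hgI
  have h0 : 0 ≤ ∫ x in Set.Ioo 0 l, g x := by
    have he : ∫ x in (0:ℝ)..l, g x = ∫ x in Set.Ioo 0 l, g x := by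
      rw [intervalIntegral.integral_of_le hl.le, integral_Ioc_eq_integral_Ioo]
    rw [← he, hFTC, hu0]
    have := sq_nonneg (u l)
    have := (hEpos l).le
    nlinarith
  have hsplit : ∫ x in Set.Ioo 0 l, g x
      = (∫ x in Set.Ioo 0 l, 2 * u x * deriv u x * E x)
        + ∫ x in Set.Ioo 0 l, 2 * s * P x * u x ^ 2 * E x :=
    integral_add i1 i2
  -- key inequalities
  have key1 : 2 * s * ρ * ∫ x in Set.Ioo 0 l, u x ^ 2 * E x
      ≤ - ∫ x in Set.Ioo 0 l, 2 * s * P x * u x ^ 2 * E x := by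
    rw [← integral_const_mul, ← integral_neg]
    refine integral_mono_ae (huE.const_mul _) i2.neg ?_
    filter_upwards [hmem] with x hx
    have hxI := Set.Ioo_subset_Icc_self hx
    have h1 := hP x hxI
    have h2 := (hEpos x).le
    have h3 := sq_nonneg (u x)
    have h4 : 0 ≤ u x ^ 2 * E x := mul_nonneg h3 h2
    nlinarith [mul_nonneg (mul_nonneg (show (0:ℝ) ≤ 2 * s by linarith)
      (show (0:ℝ) ≤ -P x - ρ by linarith)) h4]
  have key2 : (∫ x in Set.Ioo 0 l, 2 * u x * deriv u x * E x)
      ≤ s * ρ * (∫ x in Set.Ioo 0 l, u x ^ 2 * E x)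
        + (1 / (s * ρ)) * ∫ x in Set.Ioo 0 l, deriv u x ^ 2 * E x := by
    rw [← integral_const_mul, ← integral_const_mul, ← integral_add (huE.const_mul _) (hu'E.const_mul _)]
    refine integral_mono_ae i1 ((huE.const_mul _).add (hu'E.const_mul _)) ?_
    filter_upwards [hmem] with x hx
    have hsρ : 0 < s * ρ := mul_pos hs hρ
    have h2 := (hEpos x).le
    have hkey : 2 * u x * deriv u x ≤ s * ρ * u x ^ 2 + 1 / (s * ρ) * deriv u x ^ 2 := by
      have hq := sq_nonneg (s * ρ * u x - deriv u x)
      have h5 : (s * ρ) * (2 * u x * deriv u x) ≤ (s * ρ) * (s * ρ * u x ^ 2 + 1 / (s * ρ) * deriv u x ^ 2) := by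
        have : (s * ρ) * (1 / (s * ρ)) = 1 := mul_one_div_cancel hsρ.ne'
        nlinarith
      exact le_of_mul_le_mul_left h5 hsρ
    calc 2 * u x * deriv u x * E x
        ≤ (s * ρ * u x ^ 2 + 1 / (s * ρ) * deriv u x ^ 2) * E x :=
          mul_le_mul_of_nonneg_right hkey h2
      _ = s * ρ * (u x ^ 2 * E x) + 1 / (s * ρ) * (deriv u x ^ 2 * E x) := by ring
  have hsρ : 0 < s * ρ := mul_pos hs hρ
  set X := ∫ x in Set.Ioo 0 l, u x ^ 2 * E x with hXdef
  set Y := ∫ x in Set.Ioo 0 l, deriv u x ^ 2 * E x with hYdef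
  have hcomb : s * ρ * X ≤ 1 / (s * ρ) * Y := by nlinarith [hsplit ▸ h0]
  have : (s * ρ) * (s * ρ * X) ≤ (s * ρ) * (1 / (s * ρ) * Y) :=
    mul_le_mul_of_nonneg_left hcomb hsρ.le
  have hfin : (s * ρ) * (1 / (s * ρ) * Y) = Y := by field_simp
  nlinarith

set_option maxHeartbeats 2000000 in
/-- Lemma A.1: scalar Carleman estimate for a first-order equation in `x`
with an integral term, with weight `ψ(x) = (e^{λd(x)} − e^{2λ‖d‖})/δ²`. -/
theorem scalar_carleman_first_order
    (ℓ v₀ v₁ : ℝ) (hℓ : 0 < ℓ) (hv₀ : 0 < v₀) (hv₀₁ : v₀ < v₁)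
    (d : ℝ → ℝ)
    (hd : ContDiffOn ℝ 2 d (Set.Icc 0 ℓ))
    (hd_pos : ∀ x ∈ Set.Ioo 0 ℓ, 0 < d x)
    (hd' : ∀ x ∈ Set.Icc 0 ℓ, deriv d x < 0)
    (Md : ℝ) (hMd : IsGreatest ((fun x => |d x|) '' Set.Icc 0 ℓ) Md)
    (lam δ : ℝ) (hlam : 0 < lam) (hδ : 0 < δ)
    (b : ℝ → ℝ → ℝ) (c : ℝ → ℝ → ℝ → ℝ)
    (hb_meas : Measurable fun q : ℝ × ℝ => b q.1 q.2)
    (hc_meas : Measurable fun q : ℝ × ℝ × ℝ => c q.1 q.2.1 q.2.2)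
    (hb_bdd : ∃ Mb : ℝ, ∀ x ∈ Set.Ioo 0 ℓ, ∀ v ∈ Vset v₀ v₁, |b x v| ≤ Mb)
    (hc_bdd : ∃ Mc : ℝ, ∀ x ∈ Set.Ioo 0 ℓ, ∀ v ∈ Vset v₀ v₁, ∀ v' ∈ Vset v₀ v₁,
      |c x v v'| ≤ Mc) :
    ∃ s₁ > (0:ℝ), ∃ C > (0:ℝ), ∀ s ≥ s₁, ∀ w F : ℝ → ℝ → ℝ,
      Measurable (fun q : ℝ × ℝ => w q.1 q.2) →
      (∀ v ∈ Vset v₀ v₁, ∀ x ∈ Set.Icc 0 ℓ, DifferentiableAt ℝ (fun y => w y v) x) →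
      IntegrableOn (fun q : ℝ × ℝ => (w q.1 q.2) ^ 2)
        ((Set.Ioo 0 ℓ) ×ˢ (Vset v₀ v₁)) →
      IntegrableOn (fun q : ℝ × ℝ => (deriv (fun y => w y q.2) q.1) ^ 2)
        ((Set.Ioo 0 ℓ) ×ˢ (Vset v₀ v₁)) →
      IntegrableOn (fun q : ℝ × ℝ => (F q.1 q.2) ^ 2)
        ((Set.Ioo 0 ℓ) ×ˢ (Vset v₀ v₁)) →
      (∀ v ∈ Vset v₀ v₁, w 0 v = 0) →
      (∀ x ∈ Set.Ioo 0 ℓ, ∀ v ∈ Vset v₀ v₁,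
        deriv (fun y => w y v) x + b x v * w x v
          + (∫ v' in Vset v₀ v₁, c x v v' * w x v') = F x v) →
      (∫ x in Set.Ioo 0 ℓ, ∫ v in Vset v₀ v₁,
          ((deriv (fun y => w y v) x) ^ 2 + s ^ 2 * (w x v) ^ 2) *
            Real.exp (2 * s * ((Real.exp (lam * d x) - Real.exp (2 * lam * Md)) / δ ^ 2)))
        ≤ C * ∫ x in Set.Ioo 0 ℓ, ∫ v in Vset v₀ v₁,
            (F x v) ^ 2 *
              Real.exp (2 * s * ((Real.exp (lam * d x) - Real.exp (2 * lam * Md)) / δ ^ 2)) := by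
  obtain ⟨Mb, hMb⟩ := hb_bdd
  obtain ⟨Mc, hMc⟩ := hc_bdd
  -- basic facts about the velocity set
  have hVm : MeasurableSet (Vset v₀ v₁) := measurableSet_Icc.union measurableSet_Icc
  haveI hνfin : IsFiniteMeasure (volume.restrict (Vset v₀ v₁)) := by
    constructor
    rw [Measure.restrict_apply_univ]
    exact lt_of_le_of_lt (measure_union_le _ _)
      (ENNReal.add_lt_top.2 ⟨measure_Icc_lt_top, measure_Icc_lt_top⟩)
  have hVne : v₀ ∈ Vset v₀ v₁ := Or.inr ⟨le_refl _, hv₀₁.le⟩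
  have hxne : ℓ / 2 ∈ Set.Ioo 0 ℓ := ⟨by linarith only [hℓ], by linarith only [hℓ]⟩
  have hMb0 : 0 ≤ Mb := le_trans (abs_nonneg _) (hMb (ℓ/2) hxne v₀ hVne)
  have hMc0 : 0 ≤ Mc := le_trans (abs_nonneg _) (hMc (ℓ/2) hxne v₀ hVne v₀ hVne)
  -- facts about d and Md
  have hdiffd : ∀ x ∈ Set.Icc 0 ℓ, DifferentiableAt ℝ d x := by
    intro x hx
    by_contra h
    have h2 := hd' x hx
    rw [deriv_zero_of_not_differentiableAt h] at h2
    exact lt_irrefl _ h2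
  have hcd : ContinuousOn d (Set.Icc 0 ℓ) := hd.continuousOn
  have hcd' : ContinuousOn (deriv d) (Set.Icc 0 ℓ) := by
    have h1 : ContinuousOn (derivWithin d (Set.Icc 0 ℓ)) (Set.Icc 0 ℓ) :=
      hd.continuousOn_derivWithin (uniqueDiffOn_Icc hℓ) (by norm_num)
    exact h1.congr fun x hx =>
      ((hdiffd x hx).derivWithin ((uniqueDiffOn_Icc hℓ) x hx)).symm
  obtain ⟨xm, hxm, hxme⟩ := hMd.1
  have hMd0 : 0 ≤ Md := hxme ▸ abs_nonneg _
  have hdle : ∀ x ∈ Set.Icc 0 ℓ, d x ≤ Md :=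
    fun x hx => (le_abs_self _).trans (hMd.2 ⟨x, hx, rfl⟩)
  -- the weight and its derivative
  set ψ : ℝ → ℝ := fun x => (Real.exp (lam * d x) - Real.exp (2 * lam * Md)) / δ ^ 2
    with hψdef
  set P : ℝ → ℝ := fun x => Real.exp (lam * d x) * (lam * deriv d x) / δ ^ 2 with hPdef
  have hψd : ∀ x ∈ Set.Icc 0 ℓ, HasDerivAt ψ (P x) x := by
    intro x hx
    have h1 : HasDerivAt (fun y => lam * d y) (lam * deriv d x) x :=
      ((hdiffd x hx).hasDerivAt).const_mul lam
    have h2 := h1.exp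
    have h3 := (h2.sub_const (Real.exp (2 * lam * Md))).div_const (δ ^ 2)
    exact h3
  have hψcont : ContinuousOn ψ (Set.Icc 0 ℓ) :=
    ((Real.continuous_exp.comp_continuousOn
      (continuousOn_const.mul hcd)).sub continuousOn_const).div_const _
  have hψ0 : ∀ x ∈ Set.Icc 0 ℓ, ψ x ≤ 0 := by
    intro x hx
    apply div_nonpos_of_nonpos_of_nonneg _ (sq_nonneg δ)
    have h1 : lam * d x ≤ 2 * lam * Md := by
      have h2 := hdle x hx
      nlinarith only [h2, hlam, hMd0]
    simpa using Real.exp_le_exp.2 h1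
  have hPcont : ContinuousOn P (Set.Icc 0 ℓ) :=
    ((Real.continuous_exp.comp_continuousOn (continuousOn_const.mul hcd)).mul
      (continuousOn_const.mul hcd')).div_const _
  obtain ⟨x₀, hx₀, hmax⟩ :=
    isCompact_Icc.exists_isMaxOn (Set.nonempty_Icc.2 hℓ.le) hPcont
  set ρ : ℝ := -P x₀ with hρdef
  have hρ : 0 < ρ := by
    have h1 : P x₀ < 0 := by
      apply div_neg_of_neg_of_pos _ (by positivity)
      exact mul_neg_of_pos_of_neg (Real.exp_pos _)
        (mul_neg_of_pos_of_neg hlam (hd' x₀ hx₀))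
    simp only [hρdef]; linarith only [h1]
  have hPle : ∀ x ∈ Set.Icc 0 ℓ, P x ≤ -ρ := by
    intro x hx
    have h := hmax hx
    simp only [hρdef, neg_neg]
    exact h
  obtain ⟨x₁, hx₁, hmax1⟩ :=
    isCompact_Icc.exists_isMaxOn (Set.nonempty_Icc.2 hℓ.le) hPcont.abs
  set MP : ℝ := |P x₁| with hMPdef
  have hPb : ∀ x ∈ Set.Icc 0 ℓ, |P x| ≤ MP := fun x hx => hmax1 hx
  have hPm : AEStronglyMeasurable P (volume.restrict (Set.Ioo 0 ℓ)) :=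
    (hPcont.mono Set.Ioo_subset_Icc_self).aestronglyMeasurable measurableSet_Ioo
  -- constants
  set νV : ℝ := (volume (Vset v₀ v₁)).toReal with hνVdef
  have hνV0 : 0 ≤ νV := ENNReal.toReal_nonneg
  set K : ℝ := 3 * Mb ^ 2 + 3 * Mc ^ 2 * νV ^ 2 with hKdef
  have hK0 : 0 ≤ K := by positivity
  refine ⟨Real.sqrt (2 * K) / ρ + 1,
    by have h := div_nonneg (Real.sqrt_nonneg (2 * K)) hρ.le; linarith only [h],
    6 + 6 / ρ ^ 2,
    by have h := div_pos (by norm_num : (0:ℝ) < 6) (pow_pos hρ 2); linarith only [h], ?_⟩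
  intro s hs w F hwm hwd hw2 hw'2 hF2 hw0 hPDE
  have hs1 : (1:ℝ) ≤ s :=
    le_trans (by have h := div_nonneg (Real.sqrt_nonneg (2 * K)) hρ.le; linarith only [h]) hs
  have hs0 : 0 < s := lt_of_lt_of_le one_pos hs1
  have hsK : 2 * K ≤ s ^ 2 * ρ ^ 2 := by
    have h1 : Real.sqrt (2 * K) ≤ s * ρ := by
      have h2 : Real.sqrt (2 * K) / ρ ≤ s := by linarith only [hs]
      exact (div_le_iff₀ hρ).1 h2
    have h2 := Real.sq_sqrt (by positivity : (0:ℝ) ≤ 2 * K)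
    nlinarith only [h1, h2, Real.sqrt_nonneg (2 * K), hρ, hs0]
  -- the exponential weight
  set E : ℝ → ℝ := fun x => Real.exp (2 * s * ψ x) with hEdef
  have hEpos : ∀ x, 0 < E x := fun x => Real.exp_pos _
  have hE1 : ∀ x ∈ Set.Icc 0 ℓ, E x ≤ 1 := by
    intro x hx
    exact Real.exp_le_one_iff.2
      (mul_nonpos_of_nonneg_of_nonpos (by linarith only [hs0]) (hψ0 x hx))
  have hEcont : ContinuousOn E (Set.Icc 0 ℓ) :=
    Real.continuous_exp.comp_continuousOn (continuousOn_const.mul hψcont)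
  -- measures
  have hprod : (volume : Measure (ℝ × ℝ)).restrict ((Set.Ioo 0 ℓ) ×ˢ (Vset v₀ v₁))
      = (volume.restrict (Set.Ioo 0 ℓ)).prod (volume.restrict (Vset v₀ v₁)) := by
    rw [MeasureTheory.Measure.volume_eq_prod, Measure.prod_restrict]
  set μx := volume.restrict (Set.Ioo 0 ℓ) with hμxdef
  set μv := volume.restrict (Vset v₀ v₁) with hμvdef
  have hw2' : Integrable (fun q : ℝ × ℝ => w q.1 q.2 ^ 2) (μx.prod μv) := by
    rw [← hprod]; exact hw2
  have hw'2' : Integrable (fun q : ℝ × ℝ => (deriv (fun y => w y q.2) q.1) ^ 2)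
      (μx.prod μv) := by rw [← hprod]; exact hw'2
  have hF2' : Integrable (fun q : ℝ × ℝ => F q.1 q.2 ^ 2) (μx.prod μv) := by
    rw [← hprod]; exact hF2
  have hmemq : ∀ᵐ q : ℝ × ℝ ∂(μx.prod μv), q ∈ (Set.Ioo 0 ℓ) ×ˢ (Vset v₀ v₁) := by
    rw [← hprod]; exact ae_restrict_mem (measurableSet_Ioo.prod hVm)
  have hEsm : AEStronglyMeasurable (fun q : ℝ × ℝ => E q.1) (μx.prod μv) := by
    rw [← hprod]
    have hc2 : ContinuousOn (fun q : ℝ × ℝ => E q.1) ((Set.Ioo 0 ℓ) ×ˢ (Vset v₀ v₁)) := by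
      apply hEcont.comp continuous_fst.continuousOn
      intro q hq
      exact Set.Ioo_subset_Icc_self hq.1
    exact hc2.aestronglyMeasurable (measurableSet_Ioo.prod hVm)
  -- weighted integrability on the product
  have hW2E : Integrable (fun q : ℝ × ℝ => w q.1 q.2 ^ 2 * E q.1) (μx.prod μv) := by
    refine hw2'.mono' (hw2'.aestronglyMeasurable.mul hEsm) ?_
    filter_upwards [hmemq] with q hq
    have h1 := hE1 q.1 (Set.Ioo_subset_Icc_self hq.1)
    have h2 := (hEpos q.1).le
    have h3 := sq_nonneg (w q.1 q.2)
    rw [Real.norm_eq_abs, abs_of_nonneg (by positivity)]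
    nlinarith only [h1, h2, h3]
  have hW'2E : Integrable
      (fun q : ℝ × ℝ => (deriv (fun y => w y q.2) q.1) ^ 2 * E q.1) (μx.prod μv) := by
    refine hw'2'.mono' (hw'2'.aestronglyMeasurable.mul hEsm) ?_
    filter_upwards [hmemq] with q hq
    have h1 := hE1 q.1 (Set.Ioo_subset_Icc_self hq.1)
    have h2 := (hEpos q.1).le
    have h3 := sq_nonneg (deriv (fun y => w y q.2) q.1)
    rw [Real.norm_eq_abs, abs_of_nonneg (by positivity)]
    nlinarith only [h1, h2, h3]
  have hFE : Integrable (fun q : ℝ × ℝ => F q.1 q.2 ^ 2 * E q.1) (μx.prod μv) := by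
    refine hF2'.mono' (hF2'.aestronglyMeasurable.mul hEsm) ?_
    filter_upwards [hmemq] with q hq
    have h1 := hE1 q.1 (Set.Ioo_subset_Icc_self hq.1)
    have h2 := (hEpos q.1).le
    have h3 := sq_nonneg (F q.1 q.2)
    rw [Real.norm_eq_abs, abs_of_nonneg (by positivity)]
    nlinarith only [h1, h2, h3]
  set A : ℝ := ∫ q : ℝ × ℝ, w q.1 q.2 ^ 2 * E q.1 ∂(μx.prod μv) with hAdef
  set B : ℝ := ∫ q : ℝ × ℝ, (deriv (fun y => w y q.2) q.1) ^ 2 * E q.1 ∂(μx.prod μv)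
    with hBdef
  set Φ : ℝ := ∫ q : ℝ × ℝ, F q.1 q.2 ^ 2 * E q.1 ∂(μx.prod μv) with hΦdef
  have hA0 : 0 ≤ A := integral_nonneg fun q => by positivity
  have hΦ0 : 0 ≤ Φ := integral_nonneg fun q => by positivity
  -- Step 1 : s²ρ²A ≤ B via the 1-D energy estimate
  have hstep1 : s ^ 2 * ρ ^ 2 * A ≤ B := by
    have hae : ∀ᵐ v ∂μv,
        s ^ 2 * ρ ^ 2 * (∫ x, w x v ^ 2 * E x ∂μx)
          ≤ ∫ x, (deriv (fun y => w y v) x) ^ 2 * E x ∂μx := by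
      filter_upwards [hw2'.prod_left_ae, hw'2'.prod_left_ae, ae_restrict_mem hVm]
        with v h1 h2 hv
      exact energy_1d hℓ hs0 hρ hψd hψ0 hPle hPb hPm (hwd v hv) (hw0 v hv) h1 h2
    calc s ^ 2 * ρ ^ 2 * A
        = ∫ v, s ^ 2 * ρ ^ 2 * (∫ x, w x v ^ 2 * E x ∂μx) ∂μv := by
          rw [hAdef, integral_prod_symm _ hW2E, ← integral_const_mul]
      _ ≤ ∫ v, (∫ x, (deriv (fun y => w y v) x) ^ 2 * E x ∂μx) ∂μv := by
          refine integral_mono_of_nonneg ?_ hW'2E.integral_prod_right hae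
          filter_upwards with v
          have h4 : (0:ℝ) ≤ ∫ x, w x v ^ 2 * E x ∂μx :=
            integral_nonneg fun x => by positivity
          positivity
      _ = B := by rw [hBdef, integral_prod_symm _ hW'2E]
  -- Step 2 : B ≤ 3Φ + KA
  have hstep2 : B ≤ 3 * Φ + K * A := by
    have hae : ∀ᵐ x ∂μx,
        (∫ v, (deriv (fun y => w y v) x) ^ 2 * E x ∂μv)
          ≤ 3 * (∫ v, F x v ^ 2 * E x ∂μv) + 3 * Mb ^ 2 * (∫ v, w x v ^ 2 * E x ∂μv)
            + 3 * Mc ^ 2 * νV ^ 2 * (∫ v, w x v ^ 2 * E x ∂μv) := by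
      filter_upwards [hw2'.prod_right_ae, hF2'.prod_right_ae,
        ae_restrict_mem measurableSet_Ioo] with x hx1 hx2 hxm2
      have hxI := Set.Ioo_subset_Icc_self hxm2
      have hE0 := hEpos x
      have hE1' := hE1 x hxI
      set G : ℝ := ∫ v, w x v ^ 2 ∂μv with hGdef
      have hG0 : 0 ≤ G := integral_nonneg fun v => sq_nonneg _
      have hwsm : AEStronglyMeasurable (fun v => w x v) μv :=
        (hwm.comp (measurable_const.prodMk measurable_id)).aestronglyMeasurable
      have hwabs : Integrable (fun v => |w x v|) μv := by
        refine Integrable.mono' ((integrable_const (1:ℝ)).add hx1)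
          (by simpa [Real.norm_eq_abs] using hwsm.norm) ?_
        filter_upwards with v
        have h5 := sq_abs (w x v)
        have h6 := abs_nonneg (w x v)
        rw [Real.norm_eq_abs, abs_abs]
        simp only [Pi.add_apply]
        nlinarith only [h5, h6]
      have hCS : (∫ v, |w x v| ∂μv) ^ 2 ≤ νV * G := by
        have h := sq_integral_abs_le hwsm hx1
        rwa [Measure.restrict_apply_univ] at h
      have hIb : ∀ v ∈ Vset v₀ v₁,
          (∫ v' in Vset v₀ v₁, c x v v' * w x v') ^ 2 ≤ Mc ^ 2 * (νV * G) := by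
        intro v hv
        have h1 : |∫ v' in Vset v₀ v₁, c x v v' * w x v'|
            ≤ ∫ v', |c x v v' * w x v'| ∂μv := by
          have h := norm_integral_le_integral_norm (μ := μv)
            (fun v' => c x v v' * w x v')
          simp only [Real.norm_eq_abs] at h
          exact h
        have h2 : (∫ v', |c x v v' * w x v'| ∂μv) ≤ ∫ v', Mc * |w x v'| ∂μv := by
          refine integral_mono_of_nonneg
            (Filter.Eventually.of_forall fun v' => abs_nonneg _)
            (hwabs.const_mul Mc) ?_
          filter_upwards [ae_restrict_mem hVm] with v' hv'
          rw [abs_mul]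
          exact mul_le_mul_of_nonneg_right (hMc x hxm2 v hv v' hv') (abs_nonneg _)
        have h3 : (∫ v', Mc * |w x v'| ∂μv) = Mc * ∫ v', |w x v'| ∂μv :=
          integral_const_mul _ _
        have h4 : |∫ v' in Vset v₀ v₁, c x v v' * w x v'| ≤ Mc * ∫ v', |w x v'| ∂μv := by
          rw [← h3]; exact h1.trans h2
        calc (∫ v' in Vset v₀ v₁, c x v v' * w x v') ^ 2
            = |∫ v' in Vset v₀ v₁, c x v v' * w x v'| ^ 2 := (sq_abs _).symm
          _ ≤ (Mc * ∫ v', |w x v'| ∂μv) ^ 2 := by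
              apply pow_le_pow_left₀ (abs_nonneg _) h4
          _ = Mc ^ 2 * (∫ v', |w x v'| ∂μv) ^ 2 := by ring
          _ ≤ Mc ^ 2 * (νV * G) := by
              apply mul_le_mul_of_nonneg_left hCS (by positivity)
      have hmono : (∫ v, (deriv (fun y => w y v) x) ^ 2 * E x ∂μv)
          ≤ ∫ v, (3 * (F x v ^ 2 * E x) + 3 * Mb ^ 2 * (w x v ^ 2 * E x)
              + 3 * (Mc ^ 2 * (νV * G)) * E x) ∂μv := by
        refine integral_mono_of_nonneg
          (Filter.Eventually.of_forall fun v => by positivity)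
          ((((hx2.mul_const (E x)).const_mul 3).add
            ((hx1.mul_const (E x)).const_mul (3 * Mb ^ 2))).add
            (integrable_const _)) ?_
        filter_upwards [ae_restrict_mem hVm] with v hv
        have hpde := hPDE x hxm2 v hv
        have hIv := hIb v hv
        have hb2 : b x v ^ 2 ≤ Mb ^ 2 := by
          have h7 := hMb x hxm2 v hv
          nlinarith only [h7, sq_abs (b x v), abs_nonneg (b x v)]
        have hder : deriv (fun y => w y v) x
            = F x v - b x v * w x v - ∫ v' in Vset v₀ v₁, c x v v' * w x v' := by
          linarith only [hpde]
        rw [hder]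
        have key : (F x v - b x v * w x v - ∫ v' in Vset v₀ v₁, c x v v' * w x v') ^ 2
            ≤ 3 * F x v ^ 2 + 3 * Mb ^ 2 * w x v ^ 2 + 3 * (Mc ^ 2 * (νV * G)) := by
          nlinarith only [sq_nonneg (F x v + b x v * w x v),
            sq_nonneg (F x v + ∫ v' in Vset v₀ v₁, c x v v' * w x v'),
            sq_nonneg (b x v * w x v - ∫ v' in Vset v₀ v₁, c x v v' * w x v'),
            mul_le_mul_of_nonneg_right hb2 (sq_nonneg (w x v)), hIv]
        calc (F x v - b x v * w x v - ∫ v' in Vset v₀ v₁, c x v v' * w x v') ^ 2 * E x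
            ≤ (3 * F x v ^ 2 + 3 * Mb ^ 2 * w x v ^ 2 + 3 * (Mc ^ 2 * (νV * G))) * E x :=
              mul_le_mul_of_nonneg_right key hE0.le
          _ = 3 * (F x v ^ 2 * E x) + 3 * Mb ^ 2 * (w x v ^ 2 * E x)
              + 3 * (Mc ^ 2 * (νV * G)) * E x := by ring
      have hval : (∫ v, (3 * (F x v ^ 2 * E x) + 3 * Mb ^ 2 * (w x v ^ 2 * E x)
              + 3 * (Mc ^ 2 * (νV * G)) * E x) ∂μv)
          = 3 * (∫ v, F x v ^ 2 * E x ∂μv) + 3 * Mb ^ 2 * (∫ v, w x v ^ 2 * E x ∂μv)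
            + 3 * Mc ^ 2 * νV ^ 2 * (∫ v, w x v ^ 2 * E x ∂μv) := by
        have ha1 : Integrable (fun v => 3 * (F x v ^ 2 * E x)) μv :=
          (hx2.mul_const (E x)).const_mul 3
        have ha2 : Integrable (fun v => 3 * Mb ^ 2 * (w x v ^ 2 * E x)) μv :=
          (hx1.mul_const (E x)).const_mul (3 * Mb ^ 2)
        have ha12 : Integrable
            (fun v => 3 * (F x v ^ 2 * E x) + 3 * Mb ^ 2 * (w x v ^ 2 * E x)) μv :=
          ha1.add ha2
        rw [integral_add ha12 (integrable_const _), integral_add ha1 ha2,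
          integral_const_mul, integral_const_mul, integral_const,
          measureReal_restrict_apply_univ, measureReal_def, smul_eq_mul]
        simp only [integral_mul_const]
        rw [← hGdef, ← hνVdef]
        ring
      exact le_trans hmono (le_of_eq hval)
    have hi1 : Integrable (fun x => ∫ v, F x v ^ 2 * E x ∂μv) μx :=
      hFE.integral_prod_left
    have hi2 : Integrable (fun x => ∫ v, w x v ^ 2 * E x ∂μv) μx :=
      hW2E.integral_prod_left
    calc B = ∫ x, (∫ v, (deriv (fun y => w y v) x) ^ 2 * E x ∂μv) ∂μx := by
          rw [hBdef, integral_prod _ hW'2E]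
      _ ≤ ∫ x, (3 * (∫ v, F x v ^ 2 * E x ∂μv) + 3 * Mb ^ 2 * (∫ v, w x v ^ 2 * E x ∂μv)
            + 3 * Mc ^ 2 * νV ^ 2 * (∫ v, w x v ^ 2 * E x ∂μv)) ∂μx := by
          refine integral_mono_of_nonneg
            (Filter.Eventually.of_forall fun x => integral_nonneg fun v => by positivity)
            (((hi1.const_mul 3).add (hi2.const_mul (3 * Mb ^ 2))).add
              (hi2.const_mul (3 * Mc ^ 2 * νV ^ 2))) hae
      _ = 3 * Φ + K * A := by
          have hb1 : Integrable (fun x => 3 * ∫ v, F x v ^ 2 * E x ∂μv) μx :=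
            hi1.const_mul 3
          have hb2 : Integrable
              (fun x => 3 * Mb ^ 2 * ∫ v, w x v ^ 2 * E x ∂μv) μx :=
            hi2.const_mul (3 * Mb ^ 2)
          have hb3 : Integrable
              (fun x => 3 * Mc ^ 2 * νV ^ 2 * ∫ v, w x v ^ 2 * E x ∂μv) μx :=
            hi2.const_mul (3 * Mc ^ 2 * νV ^ 2)
          have hb12 : Integrable (fun x => 3 * (∫ v, F x v ^ 2 * E x ∂μv)
              + 3 * Mb ^ 2 * (∫ v, w x v ^ 2 * E x ∂μv)) μx := hb1.add hb2
          have hΦiter : Φ = ∫ x, ∫ v, F x v ^ 2 * E x ∂μv ∂μx := by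
            rw [hΦdef]; exact integral_prod _ hFE
          have hAiter : A = ∫ x, ∫ v, w x v ^ 2 * E x ∂μv ∂μx := by
            rw [hAdef]; exact integral_prod _ hW2E
          rw [integral_add hb12 hb3, integral_add hb1 hb2,
            integral_const_mul, integral_const_mul, integral_const_mul,
            hΦiter, hAiter, hKdef]
          ring
  -- assembling
  have hKA : K * A ≤ 3 * Φ := by
    linarith only [hstep1, hstep2, mul_le_mul_of_nonneg_right hsK hA0]
  have hs2A : s ^ 2 * A ≤ 6 * Φ / ρ ^ 2 := by
    rw [le_div_iff₀ (pow_pos hρ 2)]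
    linarith only [hstep1, hstep2, hKA]
  have hfinal : B + s ^ 2 * A ≤ (6 + 6 / ρ ^ 2) * Φ := by
    have h1 : (6 + 6 / ρ ^ 2) * Φ = 6 * Φ + 6 * Φ / ρ ^ 2 := by ring
    rw [h1]
    linarith only [hstep2, hKA, hs2A]
  have hin : ∀ᵐ x ∂μx,
      (∫ v, ((deriv (fun y => w y v) x) ^ 2 + s ^ 2 * w x v ^ 2) * E x ∂μv)
        = (∫ v, (deriv (fun y => w y v) x) ^ 2 * E x ∂μv)
          + s ^ 2 * ∫ v, w x v ^ 2 * E x ∂μv := by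
    filter_upwards [hW'2E.prod_right_ae, hW2E.prod_right_ae] with x h1 h2
    have h1' : Integrable (fun v => (deriv (fun y => w y v) x) ^ 2 * E x) μv := h1
    have h2' : Integrable (fun v => s ^ 2 * (w x v ^ 2 * E x)) μv := h2.const_mul _
    have h2'' : Integrable (fun v => w x v ^ 2 * E x) μv := h2
    rw [show (fun v => ((deriv (fun y => w y v) x) ^ 2 + s ^ 2 * w x v ^ 2) * E x)
        = fun v => (deriv (fun y => w y v) x) ^ 2 * E x + s ^ 2 * (w x v ^ 2 * E x) from
        funext fun v => by ring,
      integral_add h1' h2', integral_const_mul]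
  have hLHS : (∫ x, ∫ v, ((deriv (fun y => w y v) x) ^ 2 + s ^ 2 * w x v ^ 2) * E x ∂μv ∂μx)
      = B + s ^ 2 * A := by
    have hc1 : Integrable
        (fun x => ∫ v, (deriv (fun y => w y v) x) ^ 2 * E x ∂μv) μx :=
      hW'2E.integral_prod_left
    have hc2 : Integrable (fun x => ∫ v, w x v ^ 2 * E x ∂μv) μx :=
      hW2E.integral_prod_left
    have hc2' : Integrable (fun x => s ^ 2 * ∫ v, w x v ^ 2 * E x ∂μv) μx :=
      hc2.const_mul _
    have hBiter : B = ∫ x, ∫ v, (deriv (fun y => w y v) x) ^ 2 * E x ∂μv ∂μx := by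
      rw [hBdef]; exact integral_prod _ hW'2E
    have hAiter : A = ∫ x, ∫ v, w x v ^ 2 * E x ∂μv ∂μx := by
      rw [hAdef]; exact integral_prod _ hW2E
    rw [integral_congr_ae hin, integral_add hc1 hc2', integral_const_mul,
      hBiter, hAiter]
  have hRHS : (∫ x, ∫ v, F x v ^ 2 * E x ∂μv ∂μx) = Φ := by
    rw [hΦdef, integral_prod _ hFE]
  show (∫ x, ∫ v, ((deriv (fun y => w y v) x) ^ 2 + s ^ 2 * w x v ^ 2) * E x ∂μv ∂μx)
      ≤ (6 + 6 / ρ ^ 2) * ∫ x, ∫ v, F x v ^ 2 * E x ∂μv ∂μx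
  rw [hLHS, hRHS]
  exact hfinal
end

section
/- One-dimensional core Carleman estimate (inequality (A.2) in the proof of Lemma A.1). Let ℓ > 0, let d : [0,ℓ] → ℝ be twice continuously differentiable with d'(x) < 0 on [0,ℓ], let λ > 0 and δ > 0, and set ψ(x) = (e^{λd(x)} − e^{2λ‖d‖})/δ² where ‖d‖ = max_{[0,ℓ]} |d|. Then there exist s₁ > 0 and C > 0 such that for every s ≥ s₁ and every continuously differentiable function w : [0,ℓ] → ℝ with w(0) = 0, ∫₀^ℓ ( |w'(x)|² + s²|w(x)|² ) e^{2sψ(x)} dx ≤ C ∫₀^ℓ |w'(x)|² e^{2sψ(x)} dx. -/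
open MeasureTheory Set

lemma my_cs {α : Type*} [MeasurableSpace α] (μ : Measure α) (f g : α → ℝ)
    (hf2 : Integrable (fun x => f x ^ 2) μ) (hg2 : Integrable (fun x => g x ^ 2) μ)
    (hfg : Integrable (fun x => f x * g x) μ) :
    (∫ x, f x * g x ∂μ) ^ 2 ≤ (∫ x, f x ^ 2 ∂μ) * (∫ x, g x ^ 2 ∂μ) := by
  have key : ∀ t : ℝ, 0 ≤ (∫ x, f x ^ 2 ∂μ) * (t * t)
      + (2 * ∫ x, f x * g x ∂μ) * t + ∫ x, g x ^ 2 ∂μ := by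
    intro t
    have h0 : 0 ≤ ∫ x, (t * f x + g x) ^ 2 ∂μ := integral_nonneg fun x => sq_nonneg _
    have h1 : (fun x => (t * f x + g x) ^ 2)
        = fun x => ((t * t) * f x ^ 2 + (2 * t) * (f x * g x)) + g x ^ 2 := by
      funext x; ring
    have e1 : ∫ x, (((t * t) * f x ^ 2 + (2 * t) * (f x * g x)) + g x ^ 2) ∂μ
        = (∫ x, ((t * t) * f x ^ 2 + (2 * t) * (f x * g x)) ∂μ) + ∫ x, g x ^ 2 ∂μ :=
      integral_add ((hf2.const_mul _).add (hfg.const_mul _)) hg2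
    have e2 : ∫ x, ((t * t) * f x ^ 2 + (2 * t) * (f x * g x)) ∂μ
        = (∫ x, (t * t) * f x ^ 2 ∂μ) + ∫ x, (2 * t) * (f x * g x) ∂μ :=
      integral_add (hf2.const_mul _) (hfg.const_mul _)
    have e3 : ∫ x, (t * t) * f x ^ 2 ∂μ = (t * t) * ∫ x, f x ^ 2 ∂μ := integral_const_mul _ _
    have e4 : ∫ x, (2 * t) * (f x * g x) ∂μ = (2 * t) * ∫ x, f x * g x ∂μ := integral_const_mul _ _
    rw [h1, e1, e2, e3, e4] at h0
    nlinarith [h0]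
  have hd := discrim_le_zero key
  rw [discrim] at hd
  nlinarith [hd]

lemma intOn_of_bdd {f : ℝ → ℝ} {S : Set ℝ} (hS : MeasurableSet S) (hvol : volume S ≠ ⊤)
    (hm : AEStronglyMeasurable f (volume.restrict S)) (C : ℝ)
    (hb : ∀ x ∈ S, |f x| ≤ C) : IntegrableOn f S := by
  haveI : IsFiniteMeasure (volume.restrict S) :=
    ⟨by rwa [Measure.restrict_apply_univ, lt_top_iff_ne_top]⟩
  refine Integrable.mono' (integrable_const C) hm ?_
  filter_upwards [ae_restrict_mem hS] with x hx
  simpa [Real.norm_eq_abs] using hb x hx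

lemma int_exp_Ioo (a b k C : ℝ) (hab : a ≤ b) (hk : k ≠ 0) :
    ∫ x in Set.Ioo a b, Real.exp (k * x + C)
      = (Real.exp (k * b + C) - Real.exp (k * a + C)) / k := by
  rw [← integral_Ioc_eq_integral_Ioo, ← intervalIntegral.integral_of_le hab]
  have hder : ∀ x ∈ Set.uIcc a b,
      HasDerivAt (fun y => Real.exp (k * y + C) / k) (Real.exp (k * x + C)) x := by
    intro x _
    have h1 : HasDerivAt (fun y : ℝ => k * y + C) k x := by
      simpa using ((hasDerivAt_id x).const_mul k).add_const C
    have h2 := h1.exp.div_const k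
    exact h2.congr_deriv (mul_div_cancel_right₀ _ hk)
  rw [intervalIntegral.integral_eq_sub_of_hasDerivAt hder
    ((Real.continuous_exp.comp (by continuity)).intervalIntegrable a b)]
  ring

lemma int_exp_decay (a b k : ℝ) (hab : a ≤ b) (hk : 0 < k) :
    ∫ x in Set.Ioo a b, Real.exp (-(k * (x - a))) ≤ 1 / k := by
  have h1 : ∀ x, Real.exp (-(k * (x - a))) = Real.exp ((-k) * x + (k * a)) := by
    intro x; congr 1; ring
  simp_rw [h1]
  rw [int_exp_Ioo a b (-k) (k * a) hab (neg_ne_zero.mpr hk.ne')]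
  have h2 : -k * a + k * a = 0 := by ring
  rw [h2, Real.exp_zero]
  have he := Real.exp_pos (-k * b + k * a)
  have hne : -k ≠ 0 := neg_ne_zero.mpr hk.ne'
  have h3 : (Real.exp (-k * b + k * a) - 1) / -k = (1 - Real.exp (-k * b + k * a)) / k := by
    field_simp; ring
  rw [h3, div_le_div_iff₀ hk hk]
  nlinarith

lemma int_exp_decay' (a b k : ℝ) (hab : a ≤ b) (hk : 0 < k) :
    ∫ t in Set.Ioo a b, Real.exp (-(k * (b - t))) ≤ 1 / k := by
  have h1 : ∀ t, Real.exp (-(k * (b - t))) = Real.exp (k * t + (-(k * b))) := by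
    intro t; congr 1; ring
  simp_rw [h1]
  rw [int_exp_Ioo a b k (-(k * b)) hab hk.ne']
  have h2 : k * b + -(k * b) = 0 := by ring
  rw [h2, Real.exp_zero]
  have := Real.exp_pos (k * a + -(k * b))
  rw [div_le_div_iff₀ hk hk]
  nlinarith

set_option maxHeartbeats 2000000 in
/-- Inequality (A.2): one-dimensional core Carleman estimate with weight
`ψ(x) = (e^{λ d(x)} − e^{2λ‖d‖})/δ²`. -/
theorem core_carleman_1d
    (ℓ : ℝ) (hℓ : 0 < ℓ)
    (d : ℝ → ℝ)
    (hd : ContDiffOn ℝ 2 d (Set.Icc 0 ℓ))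
    (hd' : ∀ x ∈ Set.Icc 0 ℓ, deriv d x < 0)
    (Md : ℝ) (hMd : IsGreatest ((fun x => |d x|) '' Set.Icc 0 ℓ) Md)
    (lam δ : ℝ) (hlam : 0 < lam) (hδ : 0 < δ) :
    ∃ s₁ > (0:ℝ), ∃ C > (0:ℝ), ∀ s ≥ s₁, ∀ w : ℝ → ℝ,
      ContDiffOn ℝ 1 w (Set.Icc 0 ℓ) → w 0 = 0 →
      (∫ x in Set.Ioo 0 ℓ,
          ((deriv w x) ^ 2 + s ^ 2 * (w x) ^ 2) *
            Real.exp (2 * s * ((Real.exp (lam * d x) - Real.exp (2 * lam * Md)) / δ ^ 2)))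
        ≤ C * ∫ x in Set.Ioo 0 ℓ,
            (deriv w x) ^ 2 *
              Real.exp (2 * s * ((Real.exp (lam * d x) - Real.exp (2 * lam * Md)) / δ ^ 2)) := by
  have hδ2 : (0:ℝ) < δ ^ 2 := by positivity
  have h0mem : (0:ℝ) ∈ Set.Icc 0 ℓ := Set.left_mem_Icc.mpr hℓ.le
  have hdabs : ∀ x ∈ Set.Icc 0 ℓ, |d x| ≤ Md := fun x hx => hMd.2 ⟨x, hx, rfl⟩
  have hMd0 : 0 ≤ Md := le_trans (abs_nonneg _) (hdabs 0 h0mem)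
  -- clamped extension of `d` and the weight `Ψ`
  set π : ℝ → ℝ := fun y => max 0 (min y ℓ) with hπ
  have hπcont : Continuous π := continuous_const.max (continuous_id.min continuous_const)
  have hπmem : ∀ y, π y ∈ Set.Icc 0 ℓ := fun y =>
    ⟨le_max_left _ _, max_le hℓ.le (min_le_right _ _)⟩
  have hπeq : ∀ y ∈ Set.Icc 0 ℓ, π y = y := fun y hy => by
    simp only [hπ]; rw [min_eq_left hy.2, max_eq_right hy.1]
  set D : ℝ → ℝ := fun y => d (π y) with hDdef
  have hDcont : Continuous D := hd.continuousOn.comp_continuous hπcont hπmem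
  have hDeq : ∀ y ∈ Set.Icc 0 ℓ, D y = d y := fun y hy => by
    simp only [hDdef]; rw [hπeq y hy]
  have hDabs : ∀ y, |D y| ≤ Md := fun y => hdabs _ (hπmem y)
  set K := Real.exp (2 * lam * Md) with hK
  set Ψ : ℝ → ℝ := fun y => (Real.exp (lam * D y) - K) / δ ^ 2 with hΨdef
  have hΨcont : Continuous Ψ :=
    ((Real.continuous_exp.comp (continuous_const.mul hDcont)).sub continuous_const).div_const _
  have hΨle : ∀ y, Ψ y ≤ 0 := by
    intro y
    apply div_nonpos_of_nonpos_of_nonneg _ hδ2.le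
    have h1 : lam * D y ≤ 2 * lam * Md := by
      have := abs_le.mp (hDabs y); nlinarith
    simp only [sub_nonpos, hK]
    exact Real.exp_le_exp.mpr h1
  -- differentiability of d and negativity of its derivative
  have hdiffd : ∀ x ∈ Set.Icc 0 ℓ, DifferentiableAt ℝ d x := by
    intro x hx
    by_contra h
    have := hd' x hx
    rw [deriv_zero_of_not_differentiableAt h] at this
    exact lt_irrefl _ this
  have hu : UniqueDiffOn ℝ (Set.Icc 0 ℓ) := uniqueDiffOn_Icc hℓ
  have hdc : ContinuousOn (deriv d) (Set.Icc 0 ℓ) := by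
    have h1 : ContinuousOn (derivWithin d (Set.Icc 0 ℓ)) (Set.Icc 0 ℓ) :=
      hd.continuousOn_derivWithin hu one_le_two
    exact h1.congr fun x hx => ((hdiffd x hx).derivWithin (hu x hx)).symm
  obtain ⟨x₀, hx₀, hmax⟩ := isCompact_Icc.exists_isMaxOn (Set.nonempty_Icc.mpr hℓ.le) hdc
  set m := -deriv d x₀ with hmdef
  have hm0 : 0 < m := by have := hd' x₀ hx₀; simp only [hmdef]; linarith
  have hdm : ∀ x ∈ Set.Icc 0 ℓ, deriv d x ≤ -m := by
    intro x hx
    have := hmax hx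
    simp only [hmdef, neg_neg]
    exact this
  set c : ℝ := lam * m * Real.exp (-(lam * Md)) / δ ^ 2 with hcdef
  have hc : 0 < c := by positivity
  -- derivative of the weight
  set Ψ' : ℝ → ℝ := fun y => lam * deriv d y * Real.exp (lam * d y) / δ ^ 2 with hΨ'def
  have hΨderiv : ∀ y ∈ Set.Ioo 0 ℓ, HasDerivAt Ψ (Ψ' y) y := by
    intro y hy
    have hnh : Set.Icc 0 ℓ ∈ nhds y := Icc_mem_nhds hy.1 hy.2
    have hday : HasDerivAt d (deriv d y) y := (hdiffd y (Set.Ioo_subset_Icc_self hy)).hasDerivAt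
    have h2 : HasDerivAt (fun z => lam * d z) (lam * deriv d y) y := hday.const_mul lam
    have h4 : HasDerivAt (fun z => (Real.exp (lam * d z) - K) / δ ^ 2) (Ψ' y) y := by
      have h3 := (h2.exp.sub_const K).div_const (δ ^ 2)
      exact h3.congr_deriv (by show _ = lam * deriv d y * Real.exp (lam * d y) / δ ^ 2; ring)
    apply h4.congr_of_eventuallyEq
    filter_upwards [hnh] with z hz
    simp only [hΨdef, hDeq z hz]
  have hΨ'le : ∀ y ∈ Set.Ioo 0 ℓ, Ψ' y ≤ -c := by
    intro y hy
    have hy' := Set.Ioo_subset_Icc_self hy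
    have h1 : deriv d y ≤ -m := hdm y hy'
    have h2 : Real.exp (-(lam * Md)) ≤ Real.exp (lam * d y) := by
      apply Real.exp_le_exp.mpr
      have := abs_le.mp (hdabs y hy'); nlinarith
    have h3 : deriv d y * Real.exp (lam * d y) ≤ -m * Real.exp (-(lam * Md)) := by
      nlinarith [Real.exp_pos (lam * d y), Real.exp_pos (-(lam * Md))]
    simp only [hΨ'def, hcdef]
    rw [← neg_div, div_le_div_iff₀ hδ2 hδ2]
    nlinarith [mul_le_mul_of_nonneg_left h3 hlam.le, hδ2]
  -- key decrease estimate for Ψ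
  have hkey : ∀ t ∈ Set.Icc 0 ℓ, ∀ x ∈ Set.Icc 0 ℓ, t ≤ x → c * (x - t) ≤ Ψ t - Ψ x := by
    intro t ht x hx htx
    rcases eq_or_lt_of_le htx with rfl | hlt
    · simp
    obtain ⟨ξ, hξ, hslope⟩ := exists_hasDerivAt_eq_slope Ψ Ψ' hlt hΨcont.continuousOn
      (fun y hy => hΨderiv y ⟨lt_of_le_of_lt ht.1 hy.1, lt_of_lt_of_le hy.2 hx.2⟩)
    have h1 : Ψ' ξ ≤ -c := hΨ'le ξ ⟨lt_of_le_of_lt ht.1 hξ.1, lt_of_lt_of_le hξ.2 hx.2⟩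
    have h2 : (Ψ x - Ψ t) / (x - t) ≤ -c := hslope ▸ h1
    rw [div_le_iff₀ (by linarith : (0:ℝ) < x - t)] at h2
    nlinarith
  refine ⟨1, one_pos, 1 + 1 / c ^ 2, by positivity, ?_⟩
  intro s hs w hw hw0
  have hs0 : (0:ℝ) < s := lt_of_lt_of_le one_pos hs
  have hsc : 0 < s * c := mul_pos hs0 hc
  haveI hfin : IsFiniteMeasure (volume.restrict (Set.Ioo (0:ℝ) ℓ)) :=
    ⟨by rw [Measure.restrict_apply_univ]; exact measure_Ioo_lt_top⟩
  set V : ℝ → ℝ := deriv w with hVdef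
  have hVmeas : Measurable V := measurable_deriv w
  have hwd : ∀ y ∈ Set.Ioo 0 ℓ, HasDerivAt w (V y) y := by
    intro y hy
    exact (((hw.differentiableOn one_ne_zero) y (Set.Ioo_subset_Icc_self hy)).differentiableAt
        (Icc_mem_nhds hy.1 hy.2)).hasDerivAt
  have hVW : ContinuousOn (derivWithin w (Set.Icc 0 ℓ)) (Set.Icc 0 ℓ) :=
    hw.continuousOn_derivWithin hu le_rfl
  obtain ⟨Cw, hCw⟩ := isCompact_Icc.exists_bound_of_continuousOn hVW
  have hVbd : ∀ y ∈ Set.Ioo 0 ℓ, |V y| ≤ Cw := by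
    intro y hy
    have h1 : derivWithin w (Set.Icc 0 ℓ) y = V y :=
      derivWithin_of_mem_nhds (Icc_mem_nhds hy.1 hy.2)
    have := hCw y (Set.Ioo_subset_Icc_self hy)
    rwa [h1, Real.norm_eq_abs] at this
  have hCwnn : 0 ≤ Cw := le_trans (norm_nonneg _) (hCw 0 h0mem)
  obtain ⟨Cw0, hCw0'⟩ := isCompact_Icc.exists_bound_of_continuousOn hw.continuousOn
  have hwbd : ∀ y ∈ Set.Icc 0 ℓ, |w y| ≤ Cw0 := fun y hy => by
    simpa [Real.norm_eq_abs] using hCw0' y hy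
  obtain ⟨CΨ, hCΨ⟩ := isCompact_Icc.exists_bound_of_continuousOn hΨcont.continuousOn
  have hCΨbd : ∀ y ∈ Set.Icc 0 ℓ, |Ψ y| ≤ CΨ := fun y hy => by
    simpa [Real.norm_eq_abs] using hCΨ y hy
  set G : ℝ → ℝ := fun y => Real.exp (2 * s * Ψ y) with hGdef
  have hGcont : Continuous G := Real.continuous_exp.comp (continuous_const.mul hΨcont)
  have hGpos : ∀ y, 0 < G y := fun y => Real.exp_pos _
  have hG1 : ∀ y, G y ≤ 1 := fun y => by
    rw [hGdef]
    simp only []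
    rw [Real.exp_le_one_iff]
    nlinarith [hΨle y]
  set F : ℝ → ℝ := fun t => V t ^ 2 * G t with hFdef
  have hFnn : ∀ t, 0 ≤ F t := fun t => by positivity
  have hFbd : ∀ t ∈ Set.Ioo 0 ℓ, F t ≤ Cw ^ 2 := by
    intro t ht
    have h1 : V t ^ 2 ≤ Cw ^ 2 := by
      have := hVbd t ht; nlinarith [abs_nonneg (V t), neg_abs_le (V t), le_abs_self (V t)]
    calc F t = V t ^ 2 * G t := rfl
      _ ≤ V t ^ 2 * 1 := mul_le_mul_of_nonneg_left (hG1 t) (sq_nonneg _)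
      _ = V t ^ 2 := mul_one _
      _ ≤ Cw ^ 2 := h1
  -- fundamental theorem of calculus
  have hFTC : ∀ x ∈ Set.Ioo 0 ℓ, w x = ∫ t in Set.Ioo 0 x, V t := by
    intro x hx
    have hVint : IntervalIntegrable V volume 0 x := by
      rw [intervalIntegrable_iff, Set.uIoc_of_le hx.1.le]
      exact intOn_of_bdd measurableSet_Ioc measure_Ioc_lt_top.ne
        hVmeas.aestronglyMeasurable Cw
        (fun t ht => hVbd t ⟨ht.1, lt_of_le_of_lt ht.2 hx.2⟩)
    have h1 := intervalIntegral.integral_eq_sub_of_hasDeriv_right_of_le hx.1.le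
      (hw.continuousOn.mono (Set.Icc_subset_Icc le_rfl hx.2.le))
      (fun t ht => (hwd t ⟨ht.1, ht.2.trans hx.2⟩).hasDerivWithinAt) hVint
    rw [hw0, sub_zero] at h1
    rw [← h1, intervalIntegral.integral_of_le hx.1.le, integral_Ioc_eq_integral_Ioo]
  -- kernel for the Fubini argument
  set H : ℝ → ℝ → ℝ := fun x t =>
    Set.indicator (Set.Ioo 0 x ∩ Set.Ioo 0 ℓ)
      (fun t => F t * Real.exp (-(s * c * (x - t)))) t with hHdef
  have hHbd : ∀ x t, |H x t| ≤ Cw ^ 2 := by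
    intro x t
    simp only [hHdef, Set.indicator_apply]
    split_ifs with h
    · obtain ⟨h1, h2⟩ := h
      have he : Real.exp (-(s * c * (x - t))) ≤ 1 := by
        rw [Real.exp_le_one_iff]
        nlinarith [h1.1, h1.2, hsc]
      have hnn : 0 ≤ F t * Real.exp (-(s * c * (x - t))) :=
        mul_nonneg (hFnn t) (Real.exp_pos _).le
      rw [abs_of_nonneg hnn]
      calc F t * Real.exp (-(s * c * (x - t))) ≤ F t * 1 :=
            mul_le_mul_of_nonneg_left he (hFnn t)
        _ = F t := mul_one _
        _ ≤ Cw ^ 2 := hFbd t h2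
    · simpa using sq_nonneg Cw
  have hSSmeas : MeasurableSet {p : ℝ × ℝ | p.2 ∈ Set.Ioo 0 p.1 ∩ Set.Ioo 0 ℓ} := by
    have hset : {p : ℝ × ℝ | p.2 ∈ Set.Ioo 0 p.1 ∩ Set.Ioo 0 ℓ}
        = ({p : ℝ × ℝ | 0 < p.2} ∩ {p : ℝ × ℝ | p.2 < p.1}) ∩ {p : ℝ × ℝ | p.2 < ℓ} := by
      ext p
      simp only [Set.mem_setOf_eq, Set.mem_inter_iff, Set.mem_Ioo]
      tauto
    rw [hset]
    exact ((measurableSet_lt measurable_const measurable_snd).inter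
      (measurableSet_lt measurable_snd measurable_fst)).inter
      (measurableSet_lt measurable_snd measurable_const)
  have hHuncurry : Function.uncurry H
      = Set.indicator {p : ℝ × ℝ | p.2 ∈ Set.Ioo 0 p.1 ∩ Set.Ioo 0 ℓ}
        (fun p => F p.2 * Real.exp (-(s * c * (p.1 - p.2)))) := by
    funext p
    simp only [Function.uncurry, hHdef, Set.indicator_apply, Set.mem_setOf_eq]
  have hφmeas : Measurable (fun p : ℝ × ℝ => F p.2 * Real.exp (-(s * c * (p.1 - p.2)))) := by
    apply Measurable.mul
    · exact ((hVmeas.comp measurable_snd).pow_const 2).mul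
        (hGcont.measurable.comp measurable_snd)
    · exact Real.continuous_exp.measurable.comp
        (((measurable_fst.sub measurable_snd).const_mul (s * c)).neg)
  have hHmeas : Measurable (Function.uncurry H) := by
    rw [hHuncurry]
    exact hφmeas.indicator hSSmeas
  have hHint : Integrable (Function.uncurry H)
      ((volume.restrict (Set.Ioo 0 ℓ)).prod (volume.restrict (Set.Ioo 0 ℓ))) := by
    refine Integrable.mono' (integrable_const (Cw ^ 2)) hHmeas.aestronglyMeasurable ?_
    filter_upwards with p
    simpa [Real.norm_eq_abs, Function.uncurry] using hHbd p.1 p.2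
  have hAeq : ∀ x ∈ Set.Ioo 0 ℓ, (∫ t in Set.Ioo 0 ℓ, H x t)
      = ∫ t in Set.Ioo 0 x, F t * Real.exp (-(s * c * (x - t))) := by
    intro x hx
    have hsub : Set.Ioo 0 x ∩ Set.Ioo 0 ℓ = Set.Ioo 0 x :=
      Set.inter_eq_left.mpr (Set.Ioo_subset_Ioo le_rfl hx.2.le)
    simp only [hHdef]
    rw [MeasureTheory.integral_indicator (measurableSet_Ioo.inter measurableSet_Ioo),
      Measure.restrict_restrict (measurableSet_Ioo.inter measurableSet_Ioo),
      Set.inter_assoc, Set.inter_self, hsub]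
  have hswap : (∫ x in Set.Ioo 0 ℓ, ∫ t in Set.Ioo 0 ℓ, H x t)
      = ∫ t in Set.Ioo 0 ℓ, ∫ x in Set.Ioo 0 ℓ, H x t := integral_integral_swap hHint
  have hstep2 : ∀ t ∈ Set.Ioo 0 ℓ,
      (∫ x in Set.Ioo 0 ℓ, H x t) ≤ (1 / (s * c)) * F t := by
    intro t ht
    have h1 : ∀ x, H x t = Set.indicator (Set.Ioi t)
        (fun x => F t * Real.exp (-(s * c * (x - t)))) x := by
      intro x
      simp only [hHdef, Set.indicator_apply, Set.mem_inter_iff, Set.mem_Ioo, Set.mem_Ioi]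
      by_cases h : t < x
      · simp [h, ht.1, ht.2]
      · simp [h]
    simp_rw [h1]
    rw [MeasureTheory.integral_indicator measurableSet_Ioi,
      Measure.restrict_restrict measurableSet_Ioi]
    have h2 : Set.Ioi t ∩ Set.Ioo 0 ℓ = Set.Ioo t ℓ := by
      ext y
      simp only [Set.mem_inter_iff, Set.mem_Ioi, Set.mem_Ioo]
      constructor
      · rintro ⟨hy1, _, hy3⟩; exact ⟨hy1, hy3⟩
      · rintro ⟨hy1, hy3⟩; exact ⟨hy1, ht.1.trans hy1, hy3⟩
    rw [h2, integral_const_mul]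
    have h3 : (∫ x in Set.Ioo t ℓ, Real.exp (-(s * c * (x - t)))) ≤ 1 / (s * c) :=
      int_exp_decay t ℓ (s * c) ht.2.le hsc
    calc F t * ∫ x in Set.Ioo t ℓ, Real.exp (-(s * c * (x - t)))
        ≤ F t * (1 / (s * c)) := mul_le_mul_of_nonneg_left h3 (hFnn t)
      _ = 1 / (s * c) * F t := by ring
  -- pointwise Cauchy–Schwarz estimate
  have hstep1 : ∀ x ∈ Set.Ioo 0 ℓ,
      s ^ 2 * w x ^ 2 * G x ≤ (s / c) * ∫ t in Set.Ioo 0 ℓ, H x t := by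
    intro x hx
    rw [hAeq x hx]
    have hsub : Set.Ioo 0 x ⊆ Set.Ioo 0 ℓ := Set.Ioo_subset_Ioo le_rfl hx.2.le
    set arg : ℝ → ℝ := fun t => s * Ψ t - s * c * (x - t) / 2 with hargdef
    have hargcont : Continuous arg := by
      apply Continuous.sub (continuous_const.mul hΨcont)
      exact (continuous_const.mul (continuous_const.sub continuous_id)).div_const 2
    set f : ℝ → ℝ := fun t => V t * Real.exp (arg t) with hfdef
    set g : ℝ → ℝ := fun t => Real.exp (-arg t) with hgdef
    have hargle : ∀ t ∈ Set.Ioo 0 x, arg t ≤ 0 := by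
      intro t ht
      have h1 := hΨle t
      have h2 : 0 ≤ s * c * (x - t) / 2 := by nlinarith [ht.2]
      simp only [hargdef]
      nlinarith
    have hargbd : ∀ t ∈ Set.Ioo 0 x, -arg t ≤ s * CΨ + s * c * ℓ / 2 := by
      intro t ht
      have h1 := abs_le.mp (hCΨbd t (Set.Ioo_subset_Icc_self (hsub ht)))
      have h2 : x - t ≤ ℓ := by
        have := ht.1; have := hx.2; linarith
      simp only [hargdef]
      nlinarith [hsc, ht.1.le]
    have hfgV : ∀ t, f t * g t = V t := by
      intro t
      simp only [hfdef, hgdef]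
      rw [mul_assoc, ← Real.exp_add, add_neg_cancel, Real.exp_zero, mul_one]
    -- integrability of the three integrands
    have hioone : volume (Set.Ioo (0:ℝ) x) ≠ ⊤ := measure_Ioo_lt_top.ne
    have hif2 : Integrable (fun t => f t ^ 2) (volume.restrict (Set.Ioo 0 x)) := by
      apply intOn_of_bdd measurableSet_Ioo hioone
        ((hVmeas.mul (Real.continuous_exp.comp hargcont).measurable).pow_const
          2).aestronglyMeasurable (Cw ^ 2)
      intro t ht
      have h1 : |V t| ≤ Cw := hVbd t (hsub ht)
      have h2 : Real.exp (arg t) ≤ 1 := Real.exp_le_one_iff.mpr (hargle t ht)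
      have h3 : |f t| ≤ Cw := by
        simp only [hfdef]
        rw [abs_mul, abs_of_nonneg (Real.exp_pos _).le]
        calc |V t| * Real.exp (arg t) ≤ Cw * 1 :=
          mul_le_mul h1 h2 (Real.exp_pos _).le hCwnn
        _ = Cw := mul_one _
      rw [abs_of_nonneg (sq_nonneg _), ← sq_abs]
      exact pow_le_pow_left₀ (abs_nonneg _) h3 2
    set B0 : ℝ := Real.exp (s * CΨ + s * c * ℓ / 2) with hB0def
    have hig2 : Integrable (fun t => g t ^ 2) (volume.restrict (Set.Ioo 0 x)) := by
      apply intOn_of_bdd measurableSet_Ioo hioone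
        (((Real.continuous_exp.comp hargcont.neg).pow 2).measurable).aestronglyMeasurable
        (B0 ^ 2)
      intro t ht
      have h2 : g t ≤ B0 := Real.exp_le_exp.mpr (hargbd t ht)
      have h3 : 0 ≤ g t := (Real.exp_pos _).le
      rw [abs_of_nonneg (sq_nonneg _)]
      exact pow_le_pow_left₀ h3 h2 2
    have hifg : Integrable (fun t => f t * g t) (volume.restrict (Set.Ioo 0 x)) := by
      apply intOn_of_bdd measurableSet_Ioo hioone ?_ Cw
        (fun t ht => by rw [hfgV t]; exact hVbd t (hsub ht))
      have : (fun t => f t * g t) = V := funext hfgV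
      rw [this]
      exact hVmeas.aestronglyMeasurable
    have hCS := my_cs (volume.restrict (Set.Ioo 0 x)) f g hif2 hig2 hifg
    have hw_eq : (∫ t in Set.Ioo 0 x, f t * g t) = w x := by
      rw [show (fun t => f t * g t) = V from funext hfgV]
      exact (hFTC x hx).symm
    have hf2eq : (∫ t in Set.Ioo 0 x, f t ^ 2)
        = ∫ t in Set.Ioo 0 x, F t * Real.exp (-(s * c * (x - t))) := by
      apply integral_congr_ae
      apply Filter.Eventually.of_forall
      intro t
      show f t ^ 2 = F t * Real.exp (-(s * c * (x - t)))
      have e1 : f t ^ 2 = V t ^ 2 * Real.exp (arg t + arg t) := by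
        simp only [hfdef]; rw [Real.exp_add]; ring
      have e2 : F t * Real.exp (-(s * c * (x - t)))
          = V t ^ 2 * Real.exp (2 * s * Ψ t + -(s * c * (x - t))) := by
        simp only [hFdef, hGdef]; rw [Real.exp_add]; ring
      rw [e1, e2]
      congr 2
      simp only [hargdef]; ring
    have hg2bd : (∫ t in Set.Ioo 0 x, g t ^ 2)
        ≤ Real.exp (-(2 * s * Ψ x)) * (1 / (s * c)) := by
      have hRint : Integrable
          (fun t => Real.exp (-(2 * s * Ψ x)) * Real.exp (-(s * c * (x - t))))
          (volume.restrict (Set.Ioo 0 x)) := by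
        apply intOn_of_bdd measurableSet_Ioo hioone
          ((by fun_prop : Continuous fun t : ℝ =>
            Real.exp (-(2 * s * Ψ x)) * Real.exp (-(s * c * (x - t)))).aestronglyMeasurable)
          (Real.exp (-(2 * s * Ψ x)))
        intro t ht
        have h1 : Real.exp (-(s * c * (x - t))) ≤ 1 := by
          rw [Real.exp_le_one_iff]; nlinarith [ht.2, hsc]
        rw [abs_of_nonneg (mul_nonneg (Real.exp_pos _).le (Real.exp_pos _).le)]
        nlinarith [Real.exp_pos (-(2 * s * Ψ x)), Real.exp_pos (-(s * c * (x - t)))]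
      have hmono : (∫ t in Set.Ioo 0 x, g t ^ 2)
          ≤ ∫ t in Set.Ioo 0 x, Real.exp (-(2 * s * Ψ x)) * Real.exp (-(s * c * (x - t))) := by
        apply setIntegral_mono_on hig2 hRint measurableSet_Ioo
        intro t ht
        show g t ^ 2 ≤ Real.exp (-(2 * s * Ψ x)) * Real.exp (-(s * c * (x - t)))
        have hk := hkey t (Set.Ioo_subset_Icc_self (hsub ht))
          x (Set.Ioo_subset_Icc_self hx) ht.2.le
        simp only [hgdef]
        rw [sq, ← Real.exp_add, ← Real.exp_add]
        apply Real.exp_le_exp.mpr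
        simp only [hargdef]
        nlinarith [hs0]
      have hE : (∫ t in Set.Ioo 0 x, Real.exp (-(s * c * (x - t)))) ≤ 1 / (s * c) :=
        int_exp_decay' 0 x (s * c) hx.1.le hsc
      calc (∫ t in Set.Ioo 0 x, g t ^ 2)
          ≤ ∫ t in Set.Ioo 0 x, Real.exp (-(2 * s * Ψ x)) * Real.exp (-(s * c * (x - t))) := hmono
        _ = Real.exp (-(2 * s * Ψ x)) * ∫ t in Set.Ioo 0 x, Real.exp (-(s * c * (x - t))) :=
            integral_const_mul _ _
        _ ≤ Real.exp (-(2 * s * Ψ x)) * (1 / (s * c)) :=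
            mul_le_mul_of_nonneg_left hE (Real.exp_pos _).le
    have hAnn : 0 ≤ ∫ t in Set.Ioo 0 x, F t * Real.exp (-(s * c * (x - t))) :=
      setIntegral_nonneg measurableSet_Ioo
        (fun t _ => mul_nonneg (hFnn t) (Real.exp_pos _).le)
    have hfinal : w x ^ 2 ≤ (∫ t in Set.Ioo 0 x, F t * Real.exp (-(s * c * (x - t))))
        * (Real.exp (-(2 * s * Ψ x)) * (1 / (s * c))) := by
      calc w x ^ 2 = (∫ t in Set.Ioo 0 x, f t * g t) ^ 2 := by rw [hw_eq]
        _ ≤ (∫ t in Set.Ioo 0 x, f t ^ 2) * ∫ t in Set.Ioo 0 x, g t ^ 2 := hCS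
        _ ≤ _ := by
            rw [hf2eq]
            exact mul_le_mul_of_nonneg_left hg2bd hAnn
    have hee : Real.exp (-(2 * s * Ψ x)) * Real.exp (2 * s * Ψ x) = 1 := by
      rw [← Real.exp_add]; simp
    have hGx : G x = Real.exp (2 * s * Ψ x) := rfl
    calc s ^ 2 * w x ^ 2 * G x
        ≤ s ^ 2 * ((∫ t in Set.Ioo 0 x, F t * Real.exp (-(s * c * (x - t))))
            * (Real.exp (-(2 * s * Ψ x)) * (1 / (s * c)))) * G x := by
          apply mul_le_mul_of_nonneg_right _ (hGpos x).le
          exact mul_le_mul_of_nonneg_left hfinal (sq_nonneg s)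
      _ = (∫ t in Set.Ioo 0 x, F t * Real.exp (-(s * c * (x - t))))
            * (Real.exp (-(2 * s * Ψ x)) * Real.exp (2 * s * Ψ x)) * (s ^ 2 * (1 / (s * c))) := by
          rw [hGx]; ring
      _ = (s / c) * ∫ t in Set.Ioo 0 x, F t * Real.exp (-(s * c * (x - t))) := by
          rw [hee]
          have : s ^ 2 * (1 / (s * c)) = s / c := by
            field_simp
          rw [this]
          ring
  -- integrability of the goal integrands
  have hIoone : volume (Set.Ioo (0:ℝ) ℓ) ≠ ⊤ := measure_Ioo_lt_top.ne
  have i1 : Integrable F (volume.restrict (Set.Ioo 0 ℓ)) :=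
    intOn_of_bdd measurableSet_Ioo hIoone
      ((hVmeas.pow_const 2).mul hGcont.measurable).aestronglyMeasurable (Cw ^ 2)
      (fun t ht => by rw [abs_of_nonneg (hFnn t)]; exact hFbd t ht)
  have hwae : AEStronglyMeasurable w (volume.restrict (Set.Ioo 0 ℓ)) :=
    (hw.continuousOn.mono Set.Ioo_subset_Icc_self).aestronglyMeasurable measurableSet_Ioo
  have i2 : Integrable (fun x => s ^ 2 * w x ^ 2 * G x)
      (volume.restrict (Set.Ioo 0 ℓ)) := by
    apply intOn_of_bdd measurableSet_Ioo hIoone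
      ((((hwae.aemeasurable.pow_const 2).const_mul _).mul
        hGcont.measurable.aemeasurable).aestronglyMeasurable) (s ^ 2 * Cw0 ^ 2)
    intro x hx
    have h1 := hwbd x (Set.Ioo_subset_Icc_self hx)
    have h2 : w x ^ 2 ≤ Cw0 ^ 2 := by
      nlinarith [abs_nonneg (w x), le_abs_self (w x), neg_abs_le (w x)]
    show |s ^ 2 * w x ^ 2 * G x| ≤ s ^ 2 * Cw0 ^ 2
    rw [abs_of_nonneg (by positivity : (0:ℝ) ≤ s ^ 2 * w x ^ 2 * G x)]
    calc s ^ 2 * w x ^ 2 * G x ≤ s ^ 2 * w x ^ 2 * 1 :=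
          mul_le_mul_of_nonneg_left (hG1 x) (by positivity)
      _ ≤ s ^ 2 * Cw0 ^ 2 := by nlinarith [sq_nonneg s]
  have iA : Integrable (fun x => ∫ t in Set.Ioo 0 ℓ, H x t)
      (volume.restrict (Set.Ioo 0 ℓ)) := hHint.integral_prod_left
  have iInner : Integrable (fun t => ∫ x in Set.Ioo 0 ℓ, H x t)
      (volume.restrict (Set.Ioo 0 ℓ)) := hHint.integral_prod_right
  -- main chain
  have hL2 : (∫ x in Set.Ioo 0 ℓ, s ^ 2 * w x ^ 2 * G x)
      ≤ (1 / c ^ 2) * ∫ t in Set.Ioo 0 ℓ, F t := by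
    calc ∫ x in Set.Ioo 0 ℓ, s ^ 2 * w x ^ 2 * G x
        ≤ ∫ x in Set.Ioo 0 ℓ, (s / c) * ∫ t in Set.Ioo 0 ℓ, H x t :=
          setIntegral_mono_on i2 (iA.const_mul _) measurableSet_Ioo hstep1
      _ = (s / c) * ∫ x in Set.Ioo 0 ℓ, ∫ t in Set.Ioo 0 ℓ, H x t := integral_const_mul _ _
      _ = (s / c) * ∫ t in Set.Ioo 0 ℓ, ∫ x in Set.Ioo 0 ℓ, H x t := by rw [hswap]
      _ ≤ (s / c) * ∫ t in Set.Ioo 0 ℓ, (1 / (s * c)) * F t := by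
          apply mul_le_mul_of_nonneg_left _ (by positivity)
          exact setIntegral_mono_on iInner (i1.const_mul _) measurableSet_Ioo hstep2
      _ = (1 / c ^ 2) * ∫ t in Set.Ioo 0 ℓ, F t := by
          rw [integral_const_mul, ← mul_assoc]
          congr 1
          field_simp
  -- rewrite the goal and conclude
  have hgoalL : (∫ x in Set.Ioo 0 ℓ,
        (V x ^ 2 + s ^ 2 * w x ^ 2) *
          Real.exp (2 * s * ((Real.exp (lam * d x) - K) / δ ^ 2)))
      = ∫ x in Set.Ioo 0 ℓ, (F x + s ^ 2 * w x ^ 2 * G x) := by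
    apply setIntegral_congr_fun measurableSet_Ioo
    intro x hx
    simp only [hFdef, hGdef, hΨdef]
    rw [hDeq x (Set.Ioo_subset_Icc_self hx)]
    ring
  have hgoalR : (∫ x in Set.Ioo 0 ℓ,
        V x ^ 2 * Real.exp (2 * s * ((Real.exp (lam * d x) - K) / δ ^ 2)))
      = ∫ x in Set.Ioo 0 ℓ, F x := by
    apply setIntegral_congr_fun measurableSet_Ioo
    intro x hx
    simp only [hFdef, hGdef, hΨdef]
    rw [hDeq x (Set.Ioo_subset_Icc_self hx)]
  rw [hgoalL, hgoalR, integral_add i1 i2]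
  have hJnn : 0 ≤ ∫ x in Set.Ioo 0 ℓ, F x :=
    setIntegral_nonneg measurableSet_Ioo fun t _ => hFnn t
  nlinarith [hL2, hJnn]
end
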